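/- arXiv:1410.5105 — 2 statements merged into one kernel-verified Lean document; each statement's English description precedes it below -/
import Mathlib

section
/- Region growing with a connectivity lower bound (unit costs): in the subdivided LP setup, assume additionally that every edge has unit cost (c_e = 1 for all e), let γ > 1, let s, t ∈ S with ℓ(s,t) ≥ 1, and suppose that for every A ⊆ S with s ∈ A and t ∉ A the number of edges of E(S) with exactly one endpoint in A is at least γ(k−1) (i.e., every s–t cut internal to S has at least γ(k−1) edges). Then there exists ρ₁ ∈ [0,1) such that both |∂(ρ₁)| ≤ (2γ/(√γ−1)²) · Vol(ρ₁) · ln( e·V^x(S)/Vol(ρ₁) ) · ln ln( e(r+1) ) and |∂(ρ₁)| ≤ (2γ/(√γ−1)²) · cVol(ρ₁) · ln( e·V^x(S)/cVol(ρ₁) ) · ln ln( e(r+1) ), where the balls are grown around z = s. -/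
open scoped Classical

namespace SubdividedLP

variable {V : Type*}

/-- The smaller of the two values of `g` at the endpoints of an edge. -/
noncomputable def dmin (g : V → ℝ) : Sym2 V → ℝ :=
  Sym2.lift ⟨fun a b => min (g a) (g b), fun a b => min_comm _ _⟩

/-- The larger of the two values of `g` at the endpoints of an edge. -/
noncomputable def dmax (g : V → ℝ) : Sym2 V → ℝ :=
  Sym2.lift ⟨fun a b => max (g a) (g b), fun a b => max_comm _ _⟩

/-- The value `ℓ(u,v)` of a symmetric function `ℓ` on an edge `{u,v}` (written in a
symmetrized form so that it is well defined on `Sym2 V`; it equals `ℓ u v` whenever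
`ℓ` is symmetric). -/
noncomputable def elen (ℓ : V → V → ℝ) : Sym2 V → ℝ :=
  Sym2.lift ⟨fun a b => (ℓ a b + ℓ b a) / 2, fun a b => by dsimp only; rw [add_comm]⟩

/-- The ball `B^S(z,ρ)` (w.r.t. the distance function `g = ℓ(z,·)`). -/
noncomputable def ball (g : V → ℝ) (S : Finset V) (ρ : ℝ) : Finset V :=
  S.filter fun v => g v ≤ ρ

/-- The boundary `∂(ρ)`: edges of `G` with both endpoints in `S`, exactly one of which
is in the ball of radius `ρ` (equivalently, `min` of the endpoint distances is `≤ ρ`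
and `max` is `> ρ`). -/
noncomputable def bdry [Fintype V] [DecidableEq V] (G : SimpleGraph V) [DecidableRel G.Adj]
    (g : V → ℝ) (S : Finset V) (ρ : ℝ) : Finset (Sym2 V) :=
  G.edgeFinset.filter fun e => (∀ w ∈ e, w ∈ S) ∧ dmin g e ≤ ρ ∧ ρ < dmax g e

/-- The volume `𝒱^{S,x}(z,ρ)`: `β` plus the contribution `c_e·ℓ(u,v)` of the `F`-edges
inside the ball, plus `c_e·(ρ - ℓ(z,u))` for each `F`-edge crossing the boundary
(`u` being its endpoint inside the ball). -/
noncomputable def vol [Fintype V] [DecidableEq V] (G : SimpleGraph V) [DecidableRel G.Adj]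
    (c : Sym2 V → ℝ) (ℓ : V → V → ℝ) (F : Finset (Sym2 V)) (S : Finset V) (z : V)
    (β ρ : ℝ) : ℝ :=
  β + ∑ e ∈ F.filter (fun e => ∀ w ∈ e, w ∈ ball (ℓ z) S ρ), c e * elen ℓ e
    + ∑ e ∈ bdry G (ℓ z) S ρ ∩ F, c e * (ρ - dmin (ℓ z) e)

/-- The complementary volume `𝒱̄^{S,x}(z,ρ)`. -/
noncomputable def cvol [Fintype V] [DecidableEq V] (G : SimpleGraph V) [DecidableRel G.Adj]
    (c : Sym2 V → ℝ) (ℓ : V → V → ℝ) (F : Finset (Sym2 V)) (S : Finset V) (z : V)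
    (β ρ : ℝ) : ℝ :=
  β + ∑ e ∈ F.filter (fun e => ∀ w ∈ e, w ∈ S ∧ w ∉ ball (ℓ z) S ρ), c e * elen ℓ e
    + ∑ e ∈ bdry G (ℓ z) S ρ ∩ F, c e * (dmax (ℓ z) e - ρ)

/-- `𝒱^x(S) = β + Σ_{e ∈ E(S)} c_e x_e`. -/
noncomputable def Vx [Fintype V] [DecidableEq V] (G : SimpleGraph V) [DecidableRel G.Adj]
    (c x : Sym2 V → ℝ) (S : Finset V) (β : ℝ) : ℝ :=
  β + ∑ e ∈ G.edgeFinset.filter (fun e => ∀ w ∈ e, w ∈ S), c e * x e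

/-- `c^q(A)`: the total cost of all but the `q-1` most expensive edges of `A`
(equivalently, the minimum cost of a subset of `A` of size `|A| - (q-1)`);
it is `0` if `|A| < q`. -/
noncomputable def cq (c : Sym2 V → ℝ) (q : ℕ) (A : Finset (Sym2 V)) : ℝ :=
  if A.card < q then 0
  else sInf ((fun B : Finset (Sym2 V) => ∑ e ∈ B, c e) ''
    {B : Finset (Sym2 V) | B ⊆ A ∧ B.card + (q - 1) = A.card})


-- telescoping over Icc
theorem aux_sum_Icc_sub (f : ℕ → ℝ) (a b : ℕ) (h : a ≤ b) :
    ∑ i ∈ Finset.Icc a b, (f (i + 1) - f i) = f (b + 1) - f a := by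
  induction b, h using Nat.le_induction with
  | base => simp
  | succ b hab ih =>
      rw [Finset.sum_Icc_succ_top (Nat.le_succ_of_le hab), ih]
      ring

-- packing of disjoint consecutive intervals
theorem aux_pack (g : ℕ → ℝ) (n : ℕ) (hg : ∀ i j, i ≤ j → j ≤ n → g i ≤ g j)
    (Q : ℕ → Prop) [DecidablePred Q] (lo hi : ℝ)
    (h : ∀ i ∈ Finset.range n, Q i → lo ≤ g i ∧ g (i + 1) ≤ hi) :
    ∑ i ∈ Finset.range n, (if Q i then g (i + 1) - g i else 0) ≤ max (hi - lo) 0 := by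
  rw [← Finset.sum_filter]
  set A := (Finset.range n).filter Q with hA
  rcases A.eq_empty_or_nonempty with hA0 | hA1
  · simp [hA0]
  · have hmin : A.min' hA1 ∈ A := A.min'_mem hA1
    have hmax : A.max' hA1 ∈ A := A.max'_mem hA1
    set i₀ := A.min' hA1
    set i₁ := A.max' hA1
    have hsub : A ⊆ Finset.Icc i₀ i₁ := by
      intro i hi
      exact Finset.mem_Icc.2 ⟨A.min'_le i hi, A.le_max' i hi⟩
    have hle1 : ∑ i ∈ A, (g (i + 1) - g i) ≤ ∑ i ∈ Finset.Icc i₀ i₁, (g (i + 1) - g i) := by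
      apply Finset.sum_le_sum_of_subset_of_nonneg hsub
      intro i hi _
      have hi1 : i₁ ∈ Finset.range n := (Finset.mem_filter.1 hmax).1
      have : i + 1 ≤ n := by
        have := (Finset.mem_Icc.1 hi).2
        have := Finset.mem_range.1 hi1
        omega
      exact sub_nonneg.2 (hg i (i + 1) (Nat.le_succ i) this)
    have htel : ∑ i ∈ Finset.Icc i₀ i₁, (g (i + 1) - g i) = g (i₁ + 1) - g i₀ :=
      aux_sum_Icc_sub g i₀ i₁ (A.min'_le i₁ hmax)
    have h0 := h i₀ (Finset.mem_filter.1 hmin).1 (Finset.mem_filter.1 hmin).2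
    have h1 := h i₁ (Finset.mem_filter.1 hmax).1 (Finset.mem_filter.1 hmax).2
    calc ∑ i ∈ A, (g (i + 1) - g i) ≤ g (i₁ + 1) - g i₀ := by rw [← htel]; exact hle1
      _ ≤ hi - lo := by have := h0.1; have := h1.2; linarith
      _ ≤ max (hi - lo) 0 := le_max_left _ _


theorem aux_mul_log_mono (B u v : ℝ) (hu : 0 < u) (huv : u ≤ v) (hvB : v ≤ B) :
    u * (Real.log (Real.exp 1 * B) - Real.log u) ≤
      v * (Real.log (Real.exp 1 * B) - Real.log v) := by
  set lE := Real.log (Real.exp 1 * B) with hlE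
  have hB : 0 < B := lt_of_lt_of_le hu (le_trans huv hvB)
  have hlEB : lE = 1 + Real.log B := by
    rw [hlE, Real.log_mul (Real.exp_ne_zero 1) (ne_of_gt hB), Real.log_exp]
  rcases eq_or_lt_of_le huv with rfl | hlt
  · exact le_refl _
  · have hderiv : ∀ w ∈ Set.Ioo u v,
        HasDerivAt (fun w => w * (lE - Real.log w)) (lE - Real.log w - 1) w := by
      intro w hw
      have hw0 : w ≠ 0 := ne_of_gt (lt_trans hu hw.1)
      have h1 : HasDerivAt (fun w : ℝ => w * (lE - Real.log w))
          (1 * (lE - Real.log w) + w * (0 - w⁻¹)) w :=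
        (hasDerivAt_id w).mul ((hasDerivAt_const w lE).sub (Real.hasDerivAt_log hw0))
      convert h1 using 1
      field_simp
      ring
    have hcont : ContinuousOn (fun w => w * (lE - Real.log w)) (Set.Icc u v) := by
      apply ContinuousOn.mul continuousOn_id
      apply ContinuousOn.sub continuousOn_const
      apply Real.continuousOn_log.mono
      intro w hw
      exact ne_of_gt (lt_of_lt_of_le hu hw.1)
    obtain ⟨ξ, hξ, hslope⟩ := exists_hasDerivAt_eq_slope _ _ hlt hcont hderiv
    have hξ0 : 0 < ξ := lt_trans hu hξ.1
    have hfd : 0 ≤ lE - Real.log ξ - 1 := by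
      have : Real.log ξ ≤ Real.log B := Real.log_le_log hξ0 (le_trans (le_of_lt hξ.2) hvB)
      rw [hlEB]; linarith
    have hvu : 0 < v - u := sub_pos.2 hlt
    have heq : v * (lE - Real.log v) - u * (lE - Real.log u)
        = (lE - Real.log ξ - 1) * (v - u) := by
      rw [hslope]; field_simp
    nlinarith [mul_nonneg hfd (le_of_lt hvu)]


theorem aux_piece (B p q m K a b : ℝ) (hab : a < b) (hm : 0 ≤ m)
    (h1 : ∀ ρ ∈ Set.Icc a b, 0 < p + m * (ρ - a) ∧ p + m * (ρ - a) ≤ B)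
    (h2 : ∀ ρ ∈ Set.Icc a b, 0 < q - m * (ρ - a) ∧ q - m * (ρ - a) ≤ B)
    (h3 : ∀ ρ ∈ Set.Ico a b,
      K * (min (p + m * (ρ - a)) (q - m * (ρ - a)) *
        (Real.log (Real.exp 1 * B) -
          Real.log (min (p + m * (ρ - a)) (q - m * (ρ - a))))) < m) :
    K * (b - a) <
      (Real.log (Real.log (Real.exp 1 * B) - Real.log (q - m * (b - a)))
        - Real.log (Real.log (Real.exp 1 * B) - Real.log (p + m * (b - a))))
      - (Real.log (Real.log (Real.exp 1 * B) - Real.log q)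
        - Real.log (Real.log (Real.exp 1 * B) - Real.log p)) := by
  set lE := Real.log (Real.exp 1 * B) with hlE
  have hB : 0 < B := by
    have := h1 a ⟨le_refl a, le_of_lt hab⟩
    simp at this
    linarith [this.1, this.2]
  have hlEB : lE = 1 + Real.log B := by
    rw [hlE, Real.log_mul (Real.exp_ne_zero 1) (ne_of_gt hB), Real.log_exp]
  -- basic fact : for 0 < u ≤ B, 1 ≤ lE - log u
  have hLN : ∀ u : ℝ, 0 < u → u ≤ B → 1 ≤ lE - Real.log u := by
    intro u hu huB
    have : Real.log u ≤ Real.log B := Real.log_le_log hu huB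
    rw [hlEB]; linarith
  set Φ : ℝ → ℝ := fun ρ =>
    Real.log (lE - Real.log (q - m * (ρ - a))) -
      Real.log (lE - Real.log (p + m * (ρ - a))) with hΦ
  have hderiv : ∀ ρ ∈ Set.Icc a b,
      HasDerivAt Φ
        ((m / (q - m * (ρ - a))) / (lE - Real.log (q - m * (ρ - a)))
          + (m / (p + m * (ρ - a))) / (lE - Real.log (p + m * (ρ - a)))) ρ := by
    intro ρ hρ
    have hv1 := h1 ρ hρ
    have hv2 := h2 ρ hρ
    have d1 : HasDerivAt (fun ρ : ℝ => p + m * (ρ - a)) m ρ := by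
      have := (((hasDerivAt_id ρ).sub_const a).const_mul m).const_add p
      simpa using this
    have d2 : HasDerivAt (fun ρ : ℝ => q - m * (ρ - a)) (-m) ρ := by
      have := (((hasDerivAt_id ρ).sub_const a).const_mul m).const_sub q
      simpa using this
    have d1' : HasDerivAt (fun ρ : ℝ => lE - Real.log (p + m * (ρ - a)))
        (-(m / (p + m * (ρ - a)))) ρ := by
      have := (d1.log (ne_of_gt hv1.1)).const_sub lE
      simpa using this
    have d2' : HasDerivAt (fun ρ : ℝ => lE - Real.log (q - m * (ρ - a)))
        (m / (q - m * (ρ - a))) ρ := by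
      have := (d2.log (ne_of_gt hv2.1)).const_sub lE
      have h' : -(-m / (q - m * (ρ - a))) = m / (q - m * (ρ - a)) := by ring
      simpa [h'] using this
    have hne1 : lE - Real.log (p + m * (ρ - a)) ≠ 0 :=
      ne_of_gt (lt_of_lt_of_le one_pos (hLN _ hv1.1 hv1.2))
    have hne2 : lE - Real.log (q - m * (ρ - a)) ≠ 0 :=
      ne_of_gt (lt_of_lt_of_le one_pos (hLN _ hv2.1 hv2.2))
    have := (d2'.log hne2).sub (d1'.log hne1)
    have harr : m / (q - m * (ρ - a)) / (lE - Real.log (q - m * (ρ - a))) -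
        -(m / (p + m * (ρ - a))) / (lE - Real.log (p + m * (ρ - a)))
        = (m / (q - m * (ρ - a))) / (lE - Real.log (q - m * (ρ - a)))
          + (m / (p + m * (ρ - a))) / (lE - Real.log (p + m * (ρ - a))) := by
      ring
    rw [harr] at this
    exact this
  have hcont : ContinuousOn Φ (Set.Icc a b) := by
    intro ρ hρ
    exact ((hderiv ρ hρ).continuousAt).continuousWithinAt
  obtain ⟨ξ, hξ, hslope⟩ := exists_hasDerivAt_eq_slope Φ _ hab hcont
    (fun ρ hρ => hderiv ρ (Set.mem_Icc_of_Ioo hρ))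
  have hξIcc : ξ ∈ Set.Icc a b := Set.mem_Icc_of_Ioo hξ
  have hv1 := h1 ξ hξIcc
  have hv2 := h2 ξ hξIcc
  set v1 := p + m * (ξ - a)
  set v2 := q - m * (ξ - a)
  have hW := h3 ξ ⟨hξ.1.le, hξ.2⟩
  -- K < Φ' ξ
  have hKlt : K < (m / v2) / (lE - Real.log v2) + (m / v1) / (lE - Real.log v1) := by
    have t1 : 0 ≤ (m / v2) / (lE - Real.log v2) :=
      div_nonneg (div_nonneg hm hv2.1.le) (le_trans zero_le_one (hLN _ hv2.1 hv2.2))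
    have t2 : 0 ≤ (m / v1) / (lE - Real.log v1) :=
      div_nonneg (div_nonneg hm hv1.1.le) (le_trans zero_le_one (hLN _ hv1.1 hv1.2))
    rcases le_total v1 v2 with hc | hc
    · have hmin : min v1 v2 = v1 := min_eq_left hc
      rw [hmin] at hW
      have hpos : 0 < v1 * (lE - Real.log v1) :=
        mul_pos hv1.1 (lt_of_lt_of_le one_pos (hLN _ hv1.1 hv1.2))
      have : K < m / (v1 * (lE - Real.log v1)) := (lt_div_iff₀ hpos).2 (by linarith [hW])
      calc K < m / (v1 * (lE - Real.log v1)) := this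
        _ = (m / v1) / (lE - Real.log v1) := by rw [div_div]
        _ ≤ _ := by linarith
    · have hmin : min v1 v2 = v2 := min_eq_right hc
      rw [hmin] at hW
      have hpos : 0 < v2 * (lE - Real.log v2) :=
        mul_pos hv2.1 (lt_of_lt_of_le one_pos (hLN _ hv2.1 hv2.2))
      have : K < m / (v2 * (lE - Real.log v2)) := (lt_div_iff₀ hpos).2 (by linarith [hW])
      calc K < m / (v2 * (lE - Real.log v2)) := this
        _ = (m / v2) / (lE - Real.log v2) := by rw [div_div]
        _ ≤ _ := by linarith
  have hΦab : Φ b - Φ a = ((m / v2) / (lE - Real.log v2)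
      + (m / v1) / (lE - Real.log v1)) * (b - a) := by
    rw [hslope]
    field_simp [ne_of_gt (sub_pos.2 hab)]
  have hba : 0 < b - a := sub_pos.2 hab
  have : K * (b - a) < Φ b - Φ a := by
    rw [hΦab]
    exact mul_lt_mul_of_pos_right hKlt hba
  have hΦa : Φ a = Real.log (lE - Real.log q) - Real.log (lE - Real.log p) := by
    simp [hΦ]
  have hΦb : Φ b = Real.log (lE - Real.log (q - m * (b - a)))
      - Real.log (lE - Real.log (p + m * (b - a))) := by simp [hΦ]
  rw [hΦa, hΦb] at this
  exact this


set_option maxHeartbeats 2000000 in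
/-- Region growing with a connectivity lower bound (unit costs): in
the subdivided LP setup with unit edge costs, if `s, t ∈ S` are at distance `ℓ(s,t) ≥ 1`
and every `s`–`t` cut internal to `S` has at least `γ(k-1)` edges (`γ > 1`), then there
is `ρ₁ ∈ [0,1)` such that `|∂(ρ₁)|` satisfies both volume bounds with the constant
`2γ/(√γ - 1)²`, the balls being grown around `z = s`. -/
theorem stmt_9 [Fintype V] [DecidableEq V] (G : SimpleGraph V) [DecidableRel G.Adj]
    (c x y : Sym2 V → ℝ) (F H : Finset (Sym2 V))
    (hc : ∀ e, c e = 1) (hx : ∀ e, 0 ≤ x e) (hy : ∀ e, 0 ≤ y e)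
    (hFE : F ⊆ G.edgeFinset) (hHE : H ⊆ G.edgeFinset) (hFH : Disjoint F H)
    (hxF : ∀ e ∉ F, x e = 0) (hyH : ∀ e ∉ H, y e = 0)
    (k r : ℕ) (hk : 2 ≤ k) (hr : 1 ≤ r)
    (hysum : ∑ e ∈ G.edgeFinset, y e ≤ (k : ℝ) - 1)
    (ℓ : V → V → ℝ)
    (hle : ∀ u v, ∀ p : G.Walk u v, ℓ u v ≤ (p.edges.map fun e => x e + y e).sum)
    (hattain : ∀ u v, G.Reachable u v →
      ∃ p : G.Walk u v, ℓ u v = (p.edges.map fun e => x e + y e).sum)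
    (hfar : ∀ u v, ¬ G.Reachable u v → 1 < ℓ u v)
    (β : ℝ) (hβ : β = (∑ e ∈ G.edgeFinset, c e * x e) / r) (hβpos : 0 < β)
    (S : Finset V) (γ : ℝ) (hγ : 1 < γ)
    (s t : V) (hs : s ∈ S) (ht : t ∈ S) (hst : 1 ≤ ℓ s t)
    (hcut : ∀ A : Finset V, A ⊆ S → s ∈ A → t ∉ A →
      γ * ((k : ℝ) - 1) ≤
        ((G.edgeFinset.filter (fun e =>
          (∀ w ∈ e, w ∈ S) ∧ (∃ u ∈ e, u ∈ A) ∧ (∃ v ∈ e, v ∉ A))).card : ℝ)) :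
    ∃ ρ₁ ∈ Set.Ico (0 : ℝ) 1,
      (((bdry G (ℓ s) S ρ₁).card : ℝ) ≤
        2 * γ / (Real.sqrt γ - 1) ^ 2 * vol G c ℓ F S s β ρ₁ *
          Real.log (Real.exp 1 * Vx G c x S β / vol G c ℓ F S s β ρ₁) *
          Real.log (Real.log (Real.exp 1 * (r + 1)))) ∧
      (((bdry G (ℓ s) S ρ₁).card : ℝ) ≤
        2 * γ / (Real.sqrt γ - 1) ^ 2 * cvol G c ℓ F S s β ρ₁ *
          Real.log (Real.exp 1 * Vx G c x S β / cvol G c ℓ F S s β ρ₁) *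
          Real.log (Real.log (Real.exp 1 * (r + 1)))) := by
  classical
  -- ## basic numeric facts
  have hγ0 : (0:ℝ) < γ := lt_trans one_pos hγ
  set σ := Real.sqrt γ with hσdef
  have hσ1 : 1 < σ := by
    rw [hσdef, show (1:ℝ) = Real.sqrt 1 by simp]
    exact Real.sqrt_lt_sqrt (by norm_num) hγ
  have hσ0 : 0 < σ := lt_trans one_pos hσ1
  have hσsq : σ ^ 2 = γ := Real.sq_sqrt hγ0.le
  have hk1 : (1:ℝ) ≤ (k:ℝ) - 1 := by
    have : (2:ℝ) ≤ (k:ℝ) := by exact_mod_cast hk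
    linarith
  have hr1 : (1:ℝ) ≤ (r:ℝ) := by exact_mod_cast hr
  set B := Vx G c x S β with hBdef
  set L := Real.log (Real.log (Real.exp 1 * ((r:ℝ) + 1))) with hLdef
  have hL0 : 0 < L := by
    rw [hLdef]
    apply Real.log_pos
    rw [Real.log_mul (Real.exp_ne_zero 1) (by linarith), Real.log_exp]
    have : 0 < Real.log ((r:ℝ) + 1) := Real.log_pos (by linarith)
    linarith
  set g : V → ℝ := ℓ s with hgdef
  set VL : ℝ → ℝ := vol G c ℓ F S s β with hVLdef
  set CV : ℝ → ℝ := cvol G c ℓ F S s β with hCVdef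
  -- ## metric facts
  have hℓ0 : ∀ u v, 0 ≤ ℓ u v := by
    intro u v
    by_cases h : G.Reachable u v
    · obtain ⟨p, hp⟩ := hattain u v h
      rw [hp]
      apply List.sum_nonneg
      intro a ha
      obtain ⟨e, _, rfl⟩ := List.mem_map.1 ha
      exact add_nonneg (hx e) (hy e)
    · linarith [hfar u v h]
  have hℓss : ℓ s s ≤ 0 := by simpa using hle s s SimpleGraph.Walk.nil
  have htri : ∀ a b c', G.Reachable a b → G.Reachable b c' → ℓ a c' ≤ ℓ a b + ℓ b c' := by
    intro a b c' h1 h2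
    obtain ⟨p, hp⟩ := hattain a b h1
    obtain ⟨q, hq⟩ := hattain b c' h2
    have h3 := hle a c' (p.append q)
    rwa [SimpleGraph.Walk.edges_append, List.map_append, List.sum_append, ← hp, ← hq] at h3
  have htri' : ∀ a b c', G.Reachable a b → G.Reachable c' b → ℓ a c' ≤ ℓ a b + ℓ c' b := by
    intro a b c' h1 h2
    obtain ⟨p, hp⟩ := hattain a b h1
    obtain ⟨q, hq⟩ := hattain c' b h2
    have h3 := hle a c' (p.append q.reverse)
    rwa [SimpleGraph.Walk.edges_append, List.map_append, List.sum_append, ← hp,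
      SimpleGraph.Walk.edges_reverse, List.map_reverse, List.sum_reverse, ← hq] at h3
  have hedge_le : ∀ u v, G.Adj u v → ℓ u v ≤ x s(u,v) + y s(u,v) := by
    intro u v h
    simpa using hle u v h.toWalk
  have helen_nonneg : ∀ e : Sym2 V, 0 ≤ elen ℓ e := by
    intro e
    induction e using Sym2.ind with
    | _ u v =>
      simp only [elen, Sym2.lift_mk]
      have := hℓ0 u v
      have := hℓ0 v u
      linarith
  have helen_le : ∀ e ∈ G.edgeFinset, elen ℓ e ≤ x e + y e := by
    intro e he
    induction e using Sym2.ind with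
    | _ u v =>
      have hadj : G.Adj u v := (SimpleGraph.mem_edgeSet G).1 (SimpleGraph.mem_edgeFinset.1 he)
      have h1 := hedge_le u v hadj
      have h2 := hedge_le v u hadj.symm
      rw [Sym2.eq_swap] at h2
      simp only [elen, Sym2.lift_mk]
      linarith
  have hgw : ∀ w, g w = ℓ s w := fun _ => rfl
  have hgapm : ∀ e ∈ G.edgeFinset, dmin g e ≤ 1 → dmax g e ≤ dmin g e + elen ℓ e := by
    intro e he
    induction e using Sym2.ind with
    | _ u v =>
      intro hd
      have hadj : G.Adj u v := (SimpleGraph.mem_edgeSet G).1 (SimpleGraph.mem_edgeFinset.1 he)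
      simp only [dmin, dmax, elen, Sym2.lift_mk] at hd ⊢
      have key : ∀ u' v' : V, G.Adj u' v' → g u' ≤ 1 →
          g v' ≤ g u' + (ℓ u' v' + ℓ v' u') / 2 := by
        intro u' v' ha hu
        have hre : G.Reachable s u' := by
          by_contra hnr
          rw [hgw] at hu
          exact absurd hu (not_le.2 (hfar s u' hnr))
        have t1 : ℓ s v' ≤ ℓ s u' + ℓ u' v' := htri s u' v' hre ha.reachable
        have t2 : ℓ s v' ≤ ℓ s u' + ℓ v' u' := htri' s u' v' hre ha.symm.reachable
        rw [hgw, hgw]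
        linarith
      rcases le_total (g u) (g v) with hc | hc
      · rw [min_eq_left hc] at hd ⊢
        rw [max_eq_right hc]
        have := key u v hadj hd
        linarith
      · rw [min_eq_right hc] at hd ⊢
        rw [max_eq_left hc]
        have := key v u hadj.symm hd
        linarith
  -- ## breakpoints
  set P : Finset ℝ := insert 0 (insert 1 ((Finset.univ.image g).filter (fun d => d ≤ 1)))
    with hPdef
  have h0P : (0:ℝ) ∈ P := by rw [hPdef]; simp
  have h1P : (1:ℝ) ∈ P := by rw [hPdef]; simp
  have hgP : ∀ w, g w ≤ 1 → g w ∈ P := by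
    intro w hw
    rw [hPdef]
    simp only [Finset.mem_insert, Finset.mem_filter, Finset.mem_image]
    exact Or.inr (Or.inr ⟨⟨w, Finset.mem_univ w, rfl⟩, hw⟩)
  have hPmem : ∀ p ∈ P, 0 ≤ p ∧ p ≤ 1 := by
    intro p hp
    rw [hPdef] at hp
    simp only [Finset.mem_insert, Finset.mem_filter, Finset.mem_image] at hp
    rcases hp with rfl | rfl | ⟨⟨w, _, rfl⟩, hw⟩
    · norm_num
    · norm_num
    · exact ⟨hℓ0 s w, hw⟩
  set n := P.card with hndef
  have hn1 : 1 < n := by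
    rw [hndef]
    exact Finset.one_lt_card.2 ⟨0, h0P, 1, h1P, by norm_num⟩
  set en : Fin n ≃o {z : ℝ // z ∈ P} := P.orderIsoOfFin hndef.symm with hendef
  set ρv : ℕ → ℝ := fun i => if h : i < n then (en ⟨i, h⟩ : ℝ) else 1 with hρdef
  have hρP : ∀ i, i < n → ρv i ∈ P := by
    intro i h
    rw [hρdef]
    dsimp only
    rw [dif_pos h]
    exact (en ⟨i, h⟩).2
  have hρmono : ∀ i j, i ≤ j → j < n → ρv i ≤ ρv j := by
    intro i j hij hj
    have hi : i < n := lt_of_le_of_lt hij hj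
    rw [hρdef]
    dsimp only
    rw [dif_pos hi, dif_pos hj]
    exact Subtype.coe_le_coe.2 (en.monotone (Fin.mk_le_mk.2 hij))
  have hρstrict : ∀ i j, i < j → j < n → ρv i < ρv j := by
    intro i j hij hj
    have hi : i < n := lt_trans hij hj
    rw [hρdef]
    dsimp only
    rw [dif_pos hi, dif_pos hj]
    exact Subtype.coe_lt_coe.2 (en.strictMono (Fin.mk_lt_mk.2 hij))
  have hρ0 : ρv 0 = 0 := by
    have h0n : 0 < n := by omega
    apply le_antisymm
    · have : (en ⟨0, h0n⟩ : ℝ) ≤ (en (en.symm ⟨(0:ℝ), h0P⟩) : ℝ) :=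
        Subtype.coe_le_coe.2 (en.monotone (Fin.mk_le_mk.2 (Nat.zero_le _)))
      rw [OrderIso.apply_symm_apply] at this
      rw [hρdef]
      dsimp only
      rw [dif_pos h0n]
      exact this
    · exact (hPmem _ (hρP 0 h0n)).1
  have hρtop : ρv (n - 1) = 1 := by
    have hNn : n - 1 < n := by omega
    apply le_antisymm
    · exact (hPmem _ (hρP _ hNn)).2
    · have hjlt := (en.symm ⟨(1:ℝ), h1P⟩).isLt
      have : (en (en.symm ⟨(1:ℝ), h1P⟩) : ℝ) ≤ (en ⟨n - 1, hNn⟩ : ℝ) :=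
        Subtype.coe_le_coe.2 (en.monotone (Fin.le_def.2
          (show (en.symm ⟨(1:ℝ), h1P⟩).val ≤ n - 1 by omega)))
      rw [OrderIso.apply_symm_apply] at this
      rw [hρdef]
      dsimp only
      rw [dif_pos hNn]
      exact this
  have hnextP : ∀ i, i + 1 < n → ∀ θ ∈ P, ρv i < θ → ρv (i + 1) ≤ θ := by
    intro i hi θ hθ hlt
    have hi' : i < n := by omega
    rw [hρdef] at hlt ⊢
    dsimp only at hlt ⊢
    rw [dif_pos hi'] at hlt
    rw [dif_pos hi]
    have hθj : (en (en.symm ⟨θ, hθ⟩) : ℝ) = θ := by rw [OrderIso.apply_symm_apply]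
    rw [← hθj] at hlt ⊢
    have h1 : (⟨i, hi'⟩ : Fin n) < en.symm ⟨θ, hθ⟩ := en.lt_iff_lt.1 (Subtype.coe_lt_coe.1 hlt)
    have h2 : (⟨i + 1, hi⟩ : Fin n) ≤ en.symm ⟨θ, hθ⟩ := by
      have hval : i < (en.symm ⟨θ, hθ⟩).val := Fin.lt_def.1 h1
      exact Fin.le_def.2 (show i + 1 ≤ (en.symm ⟨θ, hθ⟩).val by omega)
    exact Subtype.coe_le_coe.2 (en.monotone h2)
  have hthr : ∀ i, i + 1 < n → ∀ θ, (θ ∈ P ∨ 1 < θ) → ∀ r', ρv i ≤ r' → r' < ρv (i + 1) →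
      (θ ≤ r' ↔ θ ≤ ρv i) := by
    intro i hi θ hθ r' hra hrb
    constructor
    · intro h
      by_contra hc
      push_neg at hc
      rcases hθ with hPc | h1'
      · have := hnextP i hi θ hPc hc
        linarith
      · have := (hPmem _ (hρP (i + 1) hi)).2
        linarith
    · intro h
      linarith
  set N := n - 1 with hNdef
  have hiN : ∀ i, i ∈ Finset.range N → i + 1 < n := by
    intro i hi
    have := Finset.mem_range.1 hi
    omega
  have hρN : ρv N = 1 := hρtop
  have hρle1 : ∀ i, i < n → ρv i ≤ 1 := fun i h => (hPmem _ (hρP i h)).2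
  have hρ0le : ∀ i, i < n → 0 ≤ ρv i := fun i h => (hPmem _ (hρP i h)).1
  have hdP : ∀ e : Sym2 V, (dmin g e ∈ P ∨ 1 < dmin g e) ∧ (dmax g e ∈ P ∨ 1 < dmax g e) := by
    intro e
    induction e using Sym2.ind with
    | _ u v =>
      simp only [dmin, dmax, Sym2.lift_mk]
      constructor
      · rcases le_or_gt (min (g u) (g v)) 1 with h | h
        · left
          rcases min_choice (g u) (g v) with hc | hc <;> rw [hc] <;> exact hgP _ (hc ▸ h)
        · right
          exact h
      · rcases le_or_gt (max (g u) (g v)) 1 with h | h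
        · left
          rcases max_choice (g u) (g v) with hc | hc <;> rw [hc] <;> exact hgP _ (hc ▸ h)
        · right
          exact h
  have hdmm : ∀ e : Sym2 V, dmin g e ≤ dmax g e := by
    intro e
    induction e using Sym2.ind with
    | _ u v =>
      simp only [dmin, dmax, Sym2.lift_mk]
      exact min_le_max
  have hdmin_le : ∀ (e : Sym2 V) (a : V), a ∈ e → dmin g e ≤ g a := by
    intro e a hae
    induction e using Sym2.ind with
    | _ u v =>
      rcases Sym2.mem_iff.1 hae with rfl | rfl
      · exact min_le_left _ _
      · exact min_le_right _ _
  have hle_dmax : ∀ (e : Sym2 V) (a : V), a ∈ e → g a ≤ dmax g e := by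
    intro e a hae
    induction e using Sym2.ind with
    | _ u v =>
      rcases Sym2.mem_iff.1 hae with rfl | rfl
      · exact le_max_left _ _
      · exact le_max_right _ _
  have hdmin_attain : ∀ e : Sym2 V, ∃ a ∈ e, g a = dmin g e := by
    intro e
    induction e using Sym2.ind with
    | _ u v =>
      rcases min_choice (g u) (g v) with hc | hc
      · exact ⟨u, Sym2.mem_mk_left u v, hc.symm⟩
      · exact ⟨v, Sym2.mem_mk_right u v, hc.symm⟩
  have hdmax_attain : ∀ e : Sym2 V, ∃ a ∈ e, g a = dmax g e := by
    intro e
    induction e using Sym2.ind with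
    | _ u v =>
      rcases max_choice (g u) (g v) with hc | hc
      · exact ⟨u, Sym2.mem_mk_left u v, hc.symm⟩
      · exact ⟨v, Sym2.mem_mk_right u v, hc.symm⟩
  -- ## contribution normal forms
  set ctb : ℝ → Sym2 V → ℝ := fun r' e => if (∀ w ∈ e, w ∈ S) then
      (if dmax g e ≤ r' then elen ℓ e else if dmin g e ≤ r' then r' - dmin g e else 0)
    else 0 with hctbdef
  set ctb' : ℝ → Sym2 V → ℝ := fun r' e => if (∀ w ∈ e, w ∈ S) then
      (if r' < dmin g e then elen ℓ e else if r' < dmax g e then dmax g e - r' else 0)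
    else 0 with hctb'def
  have hbdry_mem : ∀ r' (e : Sym2 V), e ∈ bdry G g S r' ↔
      e ∈ G.edgeFinset ∧ (∀ w ∈ e, w ∈ S) ∧ dmin g e ≤ r' ∧ r' < dmax g e := by
    intro r' e
    simp [bdry, Finset.mem_filter, and_assoc]
  have hball_eq : ∀ r', F.filter (fun e => ∀ w ∈ e, w ∈ ball g S r') =
      F.filter (fun e => (∀ w ∈ e, w ∈ S) ∧ dmax g e ≤ r') := by
    intro r'
    apply Finset.filter_congr
    intro e _
    induction e using Sym2.ind with
    | _ u v =>
      simp only [ball, Finset.mem_filter, Sym2.mem_iff, dmax, Sym2.lift_mk, max_le_iff,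
        forall_eq_or_imp, forall_eq]
      tauto
  have hbdryF_eq : ∀ r', bdry G g S r' ∩ F =
      F.filter (fun e => (∀ w ∈ e, w ∈ S) ∧ (dmin g e ≤ r' ∧ ¬ dmax g e ≤ r')) := by
    intro r'
    ext e
    simp only [Finset.mem_inter, hbdry_mem, Finset.mem_filter, not_le]
    constructor
    · rintro ⟨⟨hE, hS, h1, h2⟩, hF⟩
      exact ⟨hF, hS, h1, h2⟩
    · rintro ⟨hF, hS, h1, h2⟩
      exact ⟨⟨hFE hF, hS, h1, h2⟩, hF⟩
  have hvolform : ∀ r', VL r' = β + ∑ e ∈ F, ctb r' e := by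
    intro r'
    rw [hVLdef]
    show vol G c ℓ F S s β r' = _
    unfold vol
    rw [← hgdef]
    simp only [hc, one_mul]
    rw [hball_eq r', hbdryF_eq r']
    have h3 : ∀ e ∈ F, ctb r' e =
        (if ((∀ w ∈ e, w ∈ S) ∧ dmax g e ≤ r') then elen ℓ e else 0) +
        (if ((∀ w ∈ e, w ∈ S) ∧ (dmin g e ≤ r' ∧ ¬ dmax g e ≤ r')) then r' - dmin g e else 0) := by
      intro e _
      simp only [hctbdef]
      by_cases hS : ∀ w ∈ e, w ∈ S
      · by_cases h4 : dmax g e ≤ r'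
        · simp [hS, h4]
        · by_cases h5 : dmin g e ≤ r' <;> simp [hS, h4, h5]
      · simp [hS]
    rw [Finset.sum_congr rfl h3, Finset.sum_add_distrib, ← Finset.sum_filter, ← Finset.sum_filter]
    ring
  have hcball_eq : ∀ r', F.filter (fun e => ∀ w ∈ e, w ∈ S ∧ w ∉ ball g S r') =
      F.filter (fun e => (∀ w ∈ e, w ∈ S) ∧ r' < dmin g e) := by
    intro r'
    apply Finset.filter_congr
    intro e _
    induction e using Sym2.ind with
    | _ u v =>
      simp only [ball, Finset.mem_filter, Sym2.mem_iff, dmin, Sym2.lift_mk, lt_min_iff,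
        forall_eq_or_imp, forall_eq, not_and, not_le]
      constructor
      · rintro ⟨⟨hu, hu'⟩, hv, hv'⟩
        exact ⟨⟨hu, hv⟩, hu' hu, hv' hv⟩
      · rintro ⟨⟨hu, hv⟩, hu', hv'⟩
        exact ⟨⟨hu, fun _ => hu'⟩, hv, fun _ => hv'⟩
  have hcvolform : ∀ r', CV r' = β + ∑ e ∈ F, ctb' r' e := by
    intro r'
    rw [hCVdef]
    show cvol G c ℓ F S s β r' = _
    unfold cvol
    rw [← hgdef]
    simp only [hc, one_mul]
    rw [hcball_eq r', hbdryF_eq r']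
    have h3 : ∀ e ∈ F, ctb' r' e =
        (if ((∀ w ∈ e, w ∈ S) ∧ r' < dmin g e) then elen ℓ e else 0) +
        (if ((∀ w ∈ e, w ∈ S) ∧ (dmin g e ≤ r' ∧ ¬ dmax g e ≤ r')) then dmax g e - r' else 0) := by
      intro e _
      simp only [hctb'def]
      by_cases hS : ∀ w ∈ e, w ∈ S
      · by_cases h4 : r' < dmin g e
        · simp [hS, h4, not_le.2 h4]
        · by_cases h5 : r' < dmax g e
          · simp [hS, h4, not_lt.1 h4, h5, not_le.2 h5]
          · simp [hS, h4, h5, not_lt.1 h5]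
      · simp [hS]
    rw [Finset.sum_congr rfl h3, Finset.sum_add_distrib, ← Finset.sum_filter, ← Finset.sum_filter]
    ring
  have hctb_nonneg : ∀ r' (e : Sym2 V), 0 ≤ ctb r' e := by
    intro r' e
    simp only [hctbdef]
    split_ifs with h1 h2 h3 <;> first | exact helen_nonneg e | linarith | norm_num
  have hctb'_nonneg : ∀ r' (e : Sym2 V), 0 ≤ ctb' r' e := by
    intro r' e
    simp only [hctb'def]
    split_ifs with h1 h2 h3 <;> first | exact helen_nonneg e | linarith | norm_num
  have hctb_mono : ∀ e ∈ G.edgeFinset, ∀ r1 r2 : ℝ, r1 ≤ r2 → r1 ≤ 1 →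
      ctb r1 e ≤ ctb r2 e := by
    intro e he r1 r2 h12 h11
    simp only [hctbdef]
    by_cases hS : ∀ w ∈ e, w ∈ S
    · rw [if_pos hS, if_pos hS]
      by_cases h2 : dmax g e ≤ r1
      · rw [if_pos h2, if_pos (le_trans h2 h12)]
      · rw [if_neg h2]
        by_cases h3 : dmin g e ≤ r1
        · rw [if_pos h3]
          have hgap := hgapm e he (le_trans h3 h11)
          by_cases h4 : dmax g e ≤ r2
          · rw [if_pos h4]
            linarith [not_le.1 h2]
          · rw [if_neg h4, if_pos (le_trans h3 h12)]
            linarith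
        · rw [if_neg h3]
          by_cases h4 : dmax g e ≤ r2
          · rw [if_pos h4]
            exact helen_nonneg e
          · rw [if_neg h4]
            by_cases h5 : dmin g e ≤ r2
            · rw [if_pos h5]
              linarith
            · rw [if_neg h5]
    · simp [hS]
  have hctb'_anti : ∀ e ∈ G.edgeFinset, ∀ r1 r2 : ℝ, r1 ≤ r2 → r2 ≤ 1 →
      ctb' r2 e ≤ ctb' r1 e := by
    intro e he r1 r2 h12 h21
    simp only [hctb'def]
    by_cases hS : ∀ w ∈ e, w ∈ S
    · rw [if_pos hS, if_pos hS]
      by_cases h2 : r2 < dmin g e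
      · rw [if_pos h2, if_pos (lt_of_le_of_lt h12 h2)]
      · rw [if_neg h2]
        have hd1 : dmin g e ≤ r2 := not_lt.1 h2
        have hgap := hgapm e he (le_trans hd1 h21)
        by_cases h3 : r2 < dmax g e
        · rw [if_pos h3]
          by_cases h4 : r1 < dmin g e
          · rw [if_pos h4]
            linarith
          · rw [if_neg h4, if_pos (lt_of_le_of_lt h12 h3)]
            linarith
        · rw [if_neg h3]
          by_cases h4 : r1 < dmin g e
          · rw [if_pos h4]
            exact helen_nonneg e
          · rw [if_neg h4]
            by_cases h5 : r1 < dmax g e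
            · rw [if_pos h5]
              linarith
            · rw [if_neg h5]
    · simp [hS]
  have hctb_le : ∀ e ∈ F, ∀ r' : ℝ, r' ≤ 1 →
      ctb r' e ≤ (if (∀ w ∈ e, w ∈ S) then x e else 0) := by
    intro e heF r' h1'
    simp only [hctbdef]
    by_cases hS : ∀ w ∈ e, w ∈ S
    · rw [if_pos hS, if_pos hS]
      have hyF : y e = 0 := hyH e (Finset.disjoint_left.1 hFH heF)
      have hxe := helen_le e (hFE heF)
      by_cases h2 : dmax g e ≤ r'
      · rw [if_pos h2]
        linarith
      · rw [if_neg h2]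
        by_cases h3 : dmin g e ≤ r'
        · rw [if_pos h3]
          have hgap := hgapm e (hFE heF) (le_trans h3 h1')
          linarith [not_le.1 h2]
        · rw [if_neg h3]
          exact hx e
    · simp [hS]
  have hctb'_le : ∀ e ∈ F, ∀ r' : ℝ, r' ≤ 1 →
      ctb' r' e ≤ (if (∀ w ∈ e, w ∈ S) then x e else 0) := by
    intro e heF r' h1'
    simp only [hctb'def]
    by_cases hS : ∀ w ∈ e, w ∈ S
    · rw [if_pos hS, if_pos hS]
      have hyF : y e = 0 := hyH e (Finset.disjoint_left.1 hFH heF)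
      have hxe := helen_le e (hFE heF)
      by_cases h2 : r' < dmin g e
      · rw [if_pos h2]
        linarith
      · rw [if_neg h2]
        by_cases h3 : r' < dmax g e
        · rw [if_pos h3]
          have hgap := hgapm e (hFE heF) (le_trans (not_lt.1 h2) h1')
          linarith [not_lt.1 h2]
        · rw [if_neg h3]
          exact hx e
    · simp [hS]
  -- ## global bounds on volumes
  have hsumxB : β + ∑ e ∈ F, (if (∀ w ∈ e, w ∈ S) then x e else 0) ≤ B := by
    rw [hBdef]
    show _ ≤ Vx G c x S β
    unfold Vx
    simp only [hc, one_mul]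
    apply add_le_add le_rfl
    rw [← Finset.sum_filter]
    apply Finset.sum_le_sum_of_subset_of_nonneg (Finset.filter_subset_filter _ hFE)
    intro e _ _
    exact hx e
  have hβvol : ∀ r', β ≤ VL r' := by
    intro r'
    rw [hvolform r']
    have : (0:ℝ) ≤ ∑ e ∈ F, ctb r' e := Finset.sum_nonneg fun e _ => hctb_nonneg r' e
    linarith
  have hβcvol : ∀ r', β ≤ CV r' := by
    intro r'
    rw [hcvolform r']
    have : (0:ℝ) ≤ ∑ e ∈ F, ctb' r' e := Finset.sum_nonneg fun e _ => hctb'_nonneg r' e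
    linarith
  have hvolB : ∀ r' : ℝ, r' ≤ 1 → VL r' ≤ B := by
    intro r' h1'
    rw [hvolform r']
    refine le_trans ?_ hsumxB
    apply add_le_add le_rfl
    exact Finset.sum_le_sum fun e he => hctb_le e he r' h1'
  have hcvolB : ∀ r' : ℝ, r' ≤ 1 → CV r' ≤ B := by
    intro r' h1'
    rw [hcvolform r']
    refine le_trans ?_ hsumxB
    apply add_le_add le_rfl
    exact Finset.sum_le_sum fun e he => hctb'_le e he r' h1'
  have hBpos : 0 < B := by
    rw [hBdef]
    show 0 < Vx G c x S β
    unfold Vx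
    simp only [hc, one_mul]
    have : (0:ℝ) ≤ ∑ e ∈ G.edgeFinset.filter (fun e => ∀ w ∈ e, w ∈ S), x e :=
      Finset.sum_nonneg fun e _ => hx e
    linarith
  have hBr : B ≤ ((r:ℝ) + 1) * β := by
    have hrne : (r:ℝ) ≠ 0 := by linarith
    have hSx : ∑ e ∈ G.edgeFinset, c e * x e = (r:ℝ) * β := by
      rw [hβ]
      field_simp
    have hsub : ∑ e ∈ G.edgeFinset.filter (fun e => ∀ w ∈ e, w ∈ S), c e * x e ≤
        ∑ e ∈ G.edgeFinset, c e * x e :=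
      Finset.sum_le_sum_of_subset_of_nonneg (Finset.filter_subset _ _)
        (fun e _ _ => by rw [hc]; simpa using hx e)
    rw [hSx] at hsub
    rw [hBdef]
    show Vx G c x S β ≤ _
    unfold Vx
    linarith
  -- ## piecewise structure
  have hbdry_const : ∀ i ∈ Finset.range N, ∀ r', ρv i ≤ r' → r' < ρv (i + 1) →
      bdry G g S r' = bdry G g S (ρv i) := by
    intro i hi r' h1' h2'
    have hi1 := hiN i hi
    ext e
    rw [hbdry_mem, hbdry_mem]
    have t1 := hthr i hi1 _ (hdP e).1 r' h1' h2'
    have t2 := hthr i hi1 _ (hdP e).2 r' h1' h2'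
    constructor
    · rintro ⟨hE, hS, ha, hb⟩
      refine ⟨hE, hS, t1.1 ha, ?_⟩
      by_contra hcc
      push_neg at hcc
      exact absurd (t2.2 hcc) (not_le.2 hb)
    · rintro ⟨hE, hS, ha, hb⟩
      refine ⟨hE, hS, t1.2 ha, ?_⟩
      by_contra hcc
      push_neg at hcc
      exact absurd (t2.1 hcc) (not_le.2 hb)
  have hvol_eqn : ∀ i ∈ Finset.range N, ∀ r', ρv i ≤ r' → r' < ρv (i + 1) →
      VL r' = VL (ρv i) + ((bdry G g S (ρv i) ∩ F).card : ℝ) * (r' - ρv i) := by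
    intro i hi r' h1' h2'
    have hi1 := hiN i hi
    rw [hvolform, hvolform]
    have key : ∀ e ∈ F, ctb r' e =
        ctb (ρv i) e + (if e ∈ bdry G g S (ρv i) then r' - ρv i else 0) := by
      intro e heF
      have t1 := hthr i hi1 _ (hdP e).1 r' h1' h2'
      have t2 := hthr i hi1 _ (hdP e).2 r' h1' h2'
      have hbm := hbdry_mem (ρv i) e
      simp only [hctbdef]
      by_cases hS : ∀ w ∈ e, w ∈ S
      · rw [if_pos hS, if_pos hS]
        by_cases h4 : dmax g e ≤ ρv i
        · have hnb : e ∉ bdry G g S (ρv i) := by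
            rw [hbm]
            rintro ⟨_, _, _, hlt⟩
            linarith
          rw [if_pos (t2.2 h4), if_pos h4, if_neg hnb]
          ring
        · by_cases h5 : dmin g e ≤ ρv i
          · have hb : e ∈ bdry G g S (ρv i) := hbm.2 ⟨hFE heF, hS, h5, not_le.1 h4⟩
            have hr4 : ¬ dmax g e ≤ r' := fun hcc => h4 (t2.1 hcc)
            rw [if_neg hr4, if_pos (t1.2 h5), if_neg h4, if_pos h5, if_pos hb]
            ring
          · have hnb : e ∉ bdry G g S (ρv i) := by
              rw [hbm]
              rintro ⟨_, _, h5', _⟩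
              exact h5 h5'
            have hr4 : ¬ dmax g e ≤ r' := fun hcc => h4 (t2.1 hcc)
            have hr5 : ¬ dmin g e ≤ r' := fun hcc => h5 (t1.1 hcc)
            rw [if_neg hr4, if_neg hr5, if_neg h4, if_neg h5, if_neg hnb]
            ring
      · have hnb : e ∉ bdry G g S (ρv i) := by
          rw [hbm]
          rintro ⟨_, hS', _⟩
          exact hS hS'
        rw [if_neg hS, if_neg hS, if_neg hnb]
        ring
    rw [Finset.sum_congr rfl key, Finset.sum_add_distrib]
    have hcc : ∑ e ∈ F, (if e ∈ bdry G g S (ρv i) then r' - ρv i else 0) =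
        ((bdry G g S (ρv i) ∩ F).card : ℝ) * (r' - ρv i) := by
      rw [Finset.sum_ite_mem, Finset.sum_const, nsmul_eq_mul, Finset.inter_comm]
    rw [hcc]
    ring
  have hcvol_eqn : ∀ i ∈ Finset.range N, ∀ r', ρv i ≤ r' → r' < ρv (i + 1) →
      CV r' = CV (ρv i) - ((bdry G g S (ρv i) ∩ F).card : ℝ) * (r' - ρv i) := by
    intro i hi r' h1' h2'
    have hi1 := hiN i hi
    rw [hcvolform, hcvolform]
    have key : ∀ e ∈ F, ctb' r' e =
        ctb' (ρv i) e - (if e ∈ bdry G g S (ρv i) then r' - ρv i else 0) := by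
      intro e heF
      have t1 := hthr i hi1 _ (hdP e).1 r' h1' h2'
      have t2 := hthr i hi1 _ (hdP e).2 r' h1' h2'
      have hbm := hbdry_mem (ρv i) e
      have hdmm := hdmm e
      simp only [hctb'def]
      by_cases hS : ∀ w ∈ e, w ∈ S
      · rw [if_pos hS, if_pos hS]
        by_cases h4 : dmax g e ≤ ρv i
        · have hnb : e ∉ bdry G g S (ρv i) := by
            rw [hbm]
            rintro ⟨_, _, _, hlt⟩
            linarith
          have hr4 := t2.2 h4
          rw [if_neg (not_lt.2 (le_trans hdmm hr4)), if_neg (not_lt.2 hr4),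
            if_neg (not_lt.2 (le_trans hdmm h4)), if_neg (not_lt.2 h4), if_neg hnb]
          ring
        · by_cases h5 : dmin g e ≤ ρv i
          · have hb : e ∈ bdry G g S (ρv i) := hbm.2 ⟨hFE heF, hS, h5, not_le.1 h4⟩
            have hr4 : ¬ dmax g e ≤ r' := fun hcc => h4 (t2.1 hcc)
            rw [if_neg (not_lt.2 (t1.2 h5)), if_pos (not_le.1 hr4),
              if_neg (not_lt.2 h5), if_pos (not_le.1 h4), if_pos hb]
            ring
          · have hnb : e ∉ bdry G g S (ρv i) := by
              rw [hbm]
              rintro ⟨_, _, h5', _⟩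
              exact h5 h5'
            have hr5 : ¬ dmin g e ≤ r' := fun hcc => h5 (t1.1 hcc)
            rw [if_pos (not_le.1 hr5), if_pos (not_le.1 h5), if_neg hnb]
            ring
      · have hnb : e ∉ bdry G g S (ρv i) := by
          rw [hbm]
          rintro ⟨_, hS', _⟩
          exact hS hS'
        rw [if_neg hS, if_neg hS, if_neg hnb]
        ring
    rw [Finset.sum_congr rfl key, Finset.sum_sub_distrib]
    have hcc : ∑ e ∈ F, (if e ∈ bdry G g S (ρv i) then r' - ρv i else 0) =
        ((bdry G g S (ρv i) ∩ F).card : ℝ) * (r' - ρv i) := by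
      rw [Finset.sum_ite_mem, Finset.sum_const, nsmul_eq_mul, Finset.inter_comm]
    rw [hcc]
    ring
  have hvol_jump : ∀ i ∈ Finset.range N,
      VL (ρv i) + ((bdry G g S (ρv i) ∩ F).card : ℝ) * (ρv (i + 1) - ρv i) ≤ VL (ρv (i + 1)) := by
    intro i hi
    have hi1 := hiN i hi
    have hii : i < n := by omega
    rw [hvolform (ρv i), hvolform (ρv (i + 1))]
    have key : ∀ e ∈ F, ctb (ρv i) e + (if e ∈ bdry G g S (ρv i) then ρv (i + 1) - ρv i else 0)
        ≤ ctb (ρv (i + 1)) e := by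
      intro e heF
      by_cases hb : e ∈ bdry G g S (ρv i)
      · obtain ⟨hE, hS, h5, h4⟩ := (hbdry_mem _ e).1 hb
        rw [if_pos hb]
        have hρ1 : ρv (i + 1) ≤ dmax g e := by
          rcases (hdP e).2 with hPm | h1m
          · exact hnextP i hi1 _ hPm h4
          · exact le_trans (hρle1 _ hi1) h1m.le
        simp only [hctbdef]
        rw [if_pos hS, if_pos hS, if_neg (not_le.2 h4), if_pos h5]
        by_cases h6 : dmax g e ≤ ρv (i + 1)
        · rw [if_pos h6]
          have heq : dmax g e = ρv (i + 1) := le_antisymm h6 hρ1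
          have hgap := hgapm e hE (le_trans h5 (hρle1 i hii))
          linarith
        · rw [if_neg h6, if_pos (le_trans h5 (hρmono i (i + 1) (by omega) hi1))]
          linarith
      · rw [if_neg hb, add_zero]
        exact hctb_mono e (hFE heF) _ _ (hρmono i (i + 1) (by omega) hi1) (hρle1 i hii)
    have hsum := Finset.sum_le_sum key
    rw [Finset.sum_add_distrib] at hsum
    have hcc : ∑ e ∈ F, (if e ∈ bdry G g S (ρv i) then ρv (i + 1) - ρv i else 0) =
        ((bdry G g S (ρv i) ∩ F).card : ℝ) * (ρv (i + 1) - ρv i) := by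
      rw [Finset.sum_ite_mem, Finset.sum_const, nsmul_eq_mul, Finset.inter_comm]
    rw [hcc] at hsum
    linarith
  have hcvol_jump : ∀ i ∈ Finset.range N,
      CV (ρv (i + 1)) ≤ CV (ρv i) - ((bdry G g S (ρv i) ∩ F).card : ℝ) * (ρv (i + 1) - ρv i) := by
    intro i hi
    have hi1 := hiN i hi
    have hii : i < n := by omega
    rw [hcvolform (ρv i), hcvolform (ρv (i + 1))]
    have key : ∀ e ∈ F, ctb' (ρv (i + 1)) e
        ≤ ctb' (ρv i) e - (if e ∈ bdry G g S (ρv i) then ρv (i + 1) - ρv i else 0) := by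
      intro e heF
      by_cases hb : e ∈ bdry G g S (ρv i)
      · obtain ⟨hE, hS, h5, h4⟩ := (hbdry_mem _ e).1 hb
        rw [if_pos hb]
        have hρ1 : ρv (i + 1) ≤ dmax g e := by
          rcases (hdP e).2 with hPm | h1m
          · exact hnextP i hi1 _ hPm h4
          · exact le_trans (hρle1 _ hi1) h1m.le
        simp only [hctb'def]
        rw [if_pos hS, if_pos hS, if_neg (not_lt.2 h5), if_pos h4,
          if_neg (not_lt.2 (le_trans h5 (hρmono i (i + 1) (by omega) hi1)))]
        by_cases h6 : ρv (i + 1) < dmax g e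
        · rw [if_pos h6]
          linarith
        · rw [if_neg h6]
          linarith
      · rw [if_neg hb, sub_zero]
        exact hctb'_anti e (hFE heF) _ _ (hρmono i (i + 1) (by omega) hi1) (hρle1 _ hi1)
    have hsum := Finset.sum_le_sum key
    rw [Finset.sum_sub_distrib] at hsum
    have hcc : ∑ e ∈ F, (if e ∈ bdry G g S (ρv i) then ρv (i + 1) - ρv i else 0) =
        ((bdry G g S (ρv i) ∩ F).card : ℝ) * (ρv (i + 1) - ρv i) := by
      rw [Finset.sum_ite_mem, Finset.sum_const, nsmul_eq_mul, Finset.inter_comm]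
    rw [hcc] at hsum
    linarith
  -- ## cut bound and splitting
  have hb_lb : ∀ r' : ℝ, 0 ≤ r' → r' < 1 → γ * ((k:ℝ) - 1) ≤ ((bdry G g S r').card : ℝ) := by
    intro r' h0' h1'
    have hA : ball g S r' ⊆ S := Finset.filter_subset _ _
    have hsA : s ∈ ball g S r' := by
      simp only [ball, Finset.mem_filter]
      refine ⟨hs, ?_⟩
      have : g s ≤ 0 := hℓss
      linarith
    have htA : t ∉ ball g S r' := by
      simp only [ball, Finset.mem_filter]
      rintro ⟨_, hlt⟩
      linarith
    have hc' := hcut (ball g S r') hA hsA htA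
    have hballm : ∀ w, w ∈ ball g S r' ↔ w ∈ S ∧ g w ≤ r' := by
      intro w
      simp [ball]
    have hEq : G.edgeFinset.filter (fun e => (∀ w ∈ e, w ∈ S) ∧
        (∃ u ∈ e, u ∈ ball g S r') ∧ (∃ v ∈ e, v ∉ ball g S r')) = bdry G g S r' := by
      ext e
      rw [Finset.mem_filter, hbdry_mem]
      constructor
      · rintro ⟨hE, hS, ⟨a, hae, ha⟩, ⟨b, hbe, hb⟩⟩
        refine ⟨hE, hS, ?_, ?_⟩
        · exact le_trans (hdmin_le e a hae) ((hballm a).1 ha).2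
        · have hbS := hS b hbe
          have hgb : r' < g b := by
            by_contra hcc
            push_neg at hcc
            exact hb ((hballm b).2 ⟨hbS, hcc⟩)
          exact lt_of_lt_of_le hgb (hle_dmax e b hbe)
      · rintro ⟨hE, hS, h1, h2⟩
        refine ⟨hE, hS, ?_, ?_⟩
        · obtain ⟨a, hae, hga⟩ := hdmin_attain e
          exact ⟨a, hae, (hballm a).2 ⟨hS a hae, by rw [hga]; exact h1⟩⟩
        · obtain ⟨b, hbe, hgb⟩ := hdmax_attain e
          refine ⟨b, hbe, ?_⟩
          rw [hballm]
          rintro ⟨_, hle'⟩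
          rw [hgb] at hle'
          linarith
    rw [hEq] at hc'
    exact hc'
  have hbFH : ∀ r' : ℝ, 0 ≤ r' → r' < 1 →
      ((bdry G g S r').card : ℝ) = ((bdry G g S r' ∩ F).card : ℝ) + ((bdry G g S r' ∩ H).card : ℝ) := by
    intro r' h0' h1'
    have hsub : bdry G g S r' ⊆ F ∪ H := by
      intro e he
      obtain ⟨hE, hS, h5, h4⟩ := (hbdry_mem r' e).1 he
      by_contra hns
      rw [Finset.mem_union] at hns
      push_neg at hns
      have hx0 : x e = 0 := hxF e hns.1
      have hy0 : y e = 0 := hyH e hns.2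
      have hel := helen_le e hE
      have hgap := hgapm e hE (le_trans h5 (le_of_lt h1'))
      linarith
    have hdisj : Disjoint (bdry G g S r' ∩ F) (bdry G g S r' ∩ H) :=
      hFH.mono Finset.inter_subset_right Finset.inter_subset_right
    have hunion : bdry G g S r' = (bdry G g S r' ∩ F) ∪ (bdry G g S r' ∩ H) := by
      rw [← Finset.inter_union_distrib_left]
      exact (Finset.inter_eq_left.2 hsub).symm
    have hcard : (bdry G g S r').card =
        (bdry G g S r' ∩ F).card + (bdry G g S r' ∩ H).card := by
      conv_lhs => rw [hunion]
      exact Finset.card_union_of_disjoint hdisj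
    rw [hcard]
    push_cast
    ring
  -- ## H measure bound
  have hHmeas : ∑ i ∈ Finset.range N, ((bdry G g S (ρv i) ∩ H).card : ℝ) * (ρv (i + 1) - ρv i)
      ≤ (k:ℝ) - 1 := by
    have step1 : ∀ i ∈ Finset.range N, ((bdry G g S (ρv i) ∩ H).card : ℝ) * (ρv (i + 1) - ρv i)
        = ∑ e ∈ H, (if e ∈ bdry G g S (ρv i) then (ρv (i + 1) - ρv i) else 0) := by
      intro i _
      rw [Finset.sum_ite_mem, Finset.sum_const, nsmul_eq_mul, Finset.inter_comm]
    rw [Finset.sum_congr rfl step1, Finset.sum_comm]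
    have step2 : ∀ e ∈ H,
        ∑ i ∈ Finset.range N, (if e ∈ bdry G g S (ρv i) then (ρv (i + 1) - ρv i) else 0) ≤ y e := by
      intro e heH
      have hgmono : ∀ i j, i ≤ j → j ≤ N → ρv i ≤ ρv j := fun i j hij hj =>
        hρmono i j hij (by omega)
      have hint : ∀ i ∈ Finset.range N, e ∈ bdry G g S (ρv i) →
          dmin g e ≤ ρv i ∧ ρv (i + 1) ≤ min (dmax g e) 1 := by
        intro i hi hb
        obtain ⟨hE, hS, h5, h4⟩ := (hbdry_mem _ e).1 hb
        have hi1 := hiN i hi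
        refine ⟨h5, le_min ?_ (hρle1 _ hi1)⟩
        rcases (hdP e).2 with hPm | h1m
        · exact hnextP i hi1 _ hPm h4
        · exact le_trans (hρle1 _ hi1) h1m.le
      have hpack := aux_pack ρv N hgmono (fun i => e ∈ bdry G g S (ρv i))
        (dmin g e) (min (dmax g e) 1) hint
      refine le_trans hpack ?_
      have hy0 := hy e
      have hx0 : x e = 0 := hxF e (Finset.disjoint_right.1 hFH heH)
      have hel := helen_le e (hHE heH)
      rcases le_or_gt (dmin g e) 1 with hq | hq
      · have hgap := hgapm e (hHE heH) hq
        have hfin : min (dmax g e) 1 - dmin g e ≤ y e := by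
          have := min_le_left (dmax g e) 1
          linarith
        exact max_le hfin hy0
      · have hfin : min (dmax g e) 1 - dmin g e ≤ y e := by
          have := min_le_right (dmax g e) 1
          linarith
        exact max_le hfin hy0
    calc ∑ e ∈ H, ∑ i ∈ Finset.range N, (if e ∈ bdry G g S (ρv i) then (ρv (i + 1) - ρv i) else 0)
        ≤ ∑ e ∈ H, y e := Finset.sum_le_sum step2
      _ ≤ ∑ e ∈ G.edgeFinset, y e :=
        Finset.sum_le_sum_of_subset_of_nonneg hHE (fun e _ _ => hy e)
      _ ≤ (k:ℝ) - 1 := hysum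
  -- ## contradiction
  by_contra hcon
  push_neg at hcon
  set lE := Real.log (Real.exp 1 * B) with hlEdef
  have hlEB : lE = 1 + Real.log B := by
    rw [hlEdef, Real.log_mul (Real.exp_ne_zero 1) (ne_of_gt hBpos), Real.log_exp]
  have hLN1 : ∀ u : ℝ, 0 < u → u ≤ B → 1 ≤ lE - Real.log u := by
    intro u hu huB
    have : Real.log u ≤ Real.log B := Real.log_le_log hu huB
    rw [hlEB]
    linarith
  have hlogLN_mono : ∀ u v' : ℝ, 0 < u → u ≤ v' → v' ≤ B →
      Real.log (lE - Real.log v') ≤ Real.log (lE - Real.log u) := by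
    intro u v' hu huv hvB
    apply Real.log_le_log
    · have h1 := hLN1 v' (lt_of_lt_of_le hu huv) hvB
      linarith
    · have := Real.log_le_log hu huv
      linarith
  have hlogmem : ∀ u : ℝ, β ≤ u → u ≤ B →
      0 ≤ Real.log (lE - Real.log u) ∧ Real.log (lE - Real.log u) ≤ L := by
    intro u hβu huB
    have hup : 0 < u := lt_of_lt_of_le hβpos hβu
    refine ⟨Real.log_nonneg (hLN1 u hup huB), ?_⟩
    have h1 : lE - Real.log u ≤ Real.log (Real.exp 1 * ((r:ℝ) + 1)) := by
      have h2 : Real.log B ≤ Real.log (((r:ℝ) + 1) * β) := Real.log_le_log hBpos hBr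
      have h3 : Real.log (((r:ℝ) + 1) * β) = Real.log ((r:ℝ) + 1) + Real.log β :=
        Real.log_mul (by linarith) (ne_of_gt hβpos)
      have h4 : Real.log β ≤ Real.log u := Real.log_le_log hβpos hβu
      have h5 : Real.log (Real.exp 1 * ((r:ℝ) + 1)) = 1 + Real.log ((r:ℝ) + 1) := by
        rw [Real.log_mul (Real.exp_ne_zero 1) (by linarith), Real.log_exp]
      rw [hlEB, h5]
      linarith
    rw [hLdef]
    exact Real.log_le_log (lt_of_lt_of_le one_pos (hLN1 u hup huB)) h1
  have hWterm : ∀ r' : ℝ, 0 ≤ r' → r' < 1 →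
      2 * γ / (σ - 1) ^ 2 * (min (VL r') (CV r') *
        (lE - Real.log (min (VL r') (CV r')))) * L < ((bdry G g S r').card : ℝ) := by
    intro r' h0' h1'
    have hcon' := hcon r' ⟨h0', h1'⟩
    have hVp : 0 < VL r' := lt_of_lt_of_le hβpos (hβvol r')
    have hCp : 0 < CV r' := lt_of_lt_of_le hβpos (hβcvol r')
    have hWp : 0 < min (VL r') (CV r') := lt_min hVp hCp
    have hVB := hvolB r' h1'.le
    have hCB := hcvolB r' h1'.le
    have hC0 : (0:ℝ) ≤ 2 * γ / (σ - 1) ^ 2 := div_nonneg (by linarith) (sq_nonneg _)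
    have hlogV : Real.log (Real.exp 1 * B / VL r') = lE - Real.log (VL r') := by
      rw [Real.log_div (by positivity) (ne_of_gt hVp), hlEdef]
    have hlogC : Real.log (Real.exp 1 * B / CV r') = lE - Real.log (CV r') := by
      rw [Real.log_div (by positivity) (ne_of_gt hCp), hlEdef]
    have hm1 : min (VL r') (CV r') * (lE - Real.log (min (VL r') (CV r')))
        ≤ VL r' * (lE - Real.log (VL r')) := by
      rw [hlEdef]
      exact aux_mul_log_mono B _ _ hWp (min_le_left _ _) hVB
    have hm2 : min (VL r') (CV r') * (lE - Real.log (min (VL r') (CV r')))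
        ≤ CV r' * (lE - Real.log (CV r')) := by
      rw [hlEdef]
      exact aux_mul_log_mono B _ _ hWp (min_le_right _ _) hCB
    by_cases hA : ((bdry G g S r').card : ℝ) ≤
        2 * γ / (σ - 1) ^ 2 * VL r' * Real.log (Real.exp 1 * B / VL r') * L
    · have hB2 := hcon' hA
      calc 2 * γ / (σ - 1) ^ 2 * (min (VL r') (CV r') *
            (lE - Real.log (min (VL r') (CV r')))) * L
          ≤ 2 * γ / (σ - 1) ^ 2 * (CV r' * (lE - Real.log (CV r'))) * L :=
            mul_le_mul_of_nonneg_right (mul_le_mul_of_nonneg_left hm2 hC0) hL0.le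
        _ = 2 * γ / (σ - 1) ^ 2 * CV r' * Real.log (Real.exp 1 * B / CV r') * L := by
            rw [hlogC]; ring
        _ < _ := hB2
    · have hB1 := not_le.1 hA
      calc 2 * γ / (σ - 1) ^ 2 * (min (VL r') (CV r') *
            (lE - Real.log (min (VL r') (CV r')))) * L
          ≤ 2 * γ / (σ - 1) ^ 2 * (VL r' * (lE - Real.log (VL r'))) * L :=
            mul_le_mul_of_nonneg_right (mul_le_mul_of_nonneg_left hm1 hC0) hL0.le
        _ = 2 * γ / (σ - 1) ^ 2 * VL r' * Real.log (Real.exp 1 * B / VL r') * L := by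
            rw [hlogV]; ring
        _ < _ := hB1
  set K := (1 - 1/σ) * (2 * γ / (σ - 1) ^ 2 * L) with hKdef
  set Ψ : ℝ → ℝ := fun r' => Real.log (lE - Real.log (CV r')) - Real.log (lE - Real.log (VL r'))
    with hΨdef
  set T := (Finset.range N).filter
      (fun i => ((bdry G g S (ρv i) ∩ H).card : ℝ) ≤ σ * ((k:ℝ) - 1)) with hTdef
  have h1σp : 0 < 1 - 1/σ := by
    have : 1/σ < 1 := (div_lt_one hσ0).2 hσ1
    linarith
  have hlen_total : ∑ i ∈ Finset.range N, (ρv (i + 1) - ρv i) = 1 := by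
    rw [Finset.sum_range_sub (fun i => ρv i) N, hρN, hρ0]
    norm_num
  have hTlen : 1 - 1/σ ≤ ∑ i ∈ T, (ρv (i + 1) - ρv i) := by
    have hsplit := Finset.sum_filter_add_sum_filter_not (Finset.range N)
      (fun i => ((bdry G g S (ρv i) ∩ H).card : ℝ) ≤ σ * ((k:ℝ) - 1))
      (fun i => ρv (i + 1) - ρv i)
    have hnotT : ∑ i ∈ (Finset.range N).filter
        (fun i => ¬ (((bdry G g S (ρv i) ∩ H).card : ℝ) ≤ σ * ((k:ℝ) - 1))),
        (ρv (i + 1) - ρv i) ≤ 1/σ := by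
      set X := ∑ i ∈ (Finset.range N).filter
        (fun i => ¬ (((bdry G g S (ρv i) ∩ H).card : ℝ) ≤ σ * ((k:ℝ) - 1))),
        (ρv (i + 1) - ρv i) with hXdef
      have h1 : σ * ((k:ℝ) - 1) * X ≤ ∑ i ∈ (Finset.range N).filter
          (fun i => ¬ (((bdry G g S (ρv i) ∩ H).card : ℝ) ≤ σ * ((k:ℝ) - 1))),
          ((bdry G g S (ρv i) ∩ H).card : ℝ) * (ρv (i + 1) - ρv i) := by
        rw [hXdef, Finset.mul_sum]
        apply Finset.sum_le_sum
        intro i hi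
        obtain ⟨hiR, hQ⟩ := Finset.mem_filter.1 hi
        push_neg at hQ
        have hl : (0:ℝ) ≤ ρv (i + 1) - ρv i :=
          sub_nonneg.2 (hρmono i (i + 1) (by omega) (hiN i hiR))
        exact mul_le_mul_of_nonneg_right hQ.le hl
      have h2 : ∑ i ∈ (Finset.range N).filter
          (fun i => ¬ (((bdry G g S (ρv i) ∩ H).card : ℝ) ≤ σ * ((k:ℝ) - 1))),
          ((bdry G g S (ρv i) ∩ H).card : ℝ) * (ρv (i + 1) - ρv i)
          ≤ ∑ i ∈ Finset.range N, ((bdry G g S (ρv i) ∩ H).card : ℝ) * (ρv (i + 1) - ρv i) :=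
        Finset.sum_le_sum_of_subset_of_nonneg (Finset.filter_subset _ _)
          (fun i hi _ => mul_nonneg (Nat.cast_nonneg _)
            (sub_nonneg.2 (hρmono i (i + 1) (by omega) (hiN i hi))))
      have hfin : σ * ((k:ℝ) - 1) * X ≤ (k:ℝ) - 1 := le_trans h1 (le_trans h2 hHmeas)
      have hσX : σ * X ≤ 1 := by nlinarith
      rw [le_div_iff₀ hσ0]
      linarith
    have hTsum : ∑ i ∈ T, (ρv (i + 1) - ρv i) = ∑ i ∈ (Finset.range N).filter
        (fun i => ((bdry G g S (ρv i) ∩ H).card : ℝ) ≤ σ * ((k:ℝ) - 1)),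
        (ρv (i + 1) - ρv i) := by rw [hTdef]
    rw [hTsum]
    linarith [hsplit, hlen_total, hnotT]
  have hTne : T.Nonempty := by
    by_contra hne
    rw [Finset.not_nonempty_iff_eq_empty] at hne
    rw [hne, Finset.sum_empty] at hTlen
    linarith
  have hpiece0 : ∀ i ∈ Finset.range N, 0 ≤ Ψ (ρv (i + 1)) - Ψ (ρv i) := by
    intro i hi
    have hi1 := hiN i hi
    have hii : i < n := by omega
    have hmlen : (0:ℝ) ≤ ((bdry G g S (ρv i) ∩ F).card : ℝ) * (ρv (i + 1) - ρv i) :=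
      mul_nonneg (Nat.cast_nonneg _) (sub_nonneg.2 (hρmono i (i + 1) (by omega) hi1))
    have hv1 : VL (ρv i) ≤ VL (ρv (i + 1)) := by
      have := hvol_jump i hi
      linarith
    have hc1 : CV (ρv (i + 1)) ≤ CV (ρv i) := by
      have := hcvol_jump i hi
      linarith
    have t1 : Real.log (lE - Real.log (CV (ρv i))) ≤ Real.log (lE - Real.log (CV (ρv (i + 1)))) :=
      hlogLN_mono _ _ (lt_of_lt_of_le hβpos (hβcvol _)) hc1 (hcvolB _ (hρle1 i hii))
    have t2 : Real.log (lE - Real.log (VL (ρv (i + 1)))) ≤ Real.log (lE - Real.log (VL (ρv i))) :=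
      hlogLN_mono _ _ (lt_of_lt_of_le hβpos (hβvol _)) hv1 (hvolB _ (hρle1 _ hi1))
    rw [hΨdef]
    dsimp only
    linarith
  have hpieceT : ∀ i ∈ T, K * (ρv (i + 1) - ρv i) < Ψ (ρv (i + 1)) - Ψ (ρv i) := by
    intro i hiT
    have hiT' : i ∈ (Finset.range N).filter
        (fun i => ((bdry G g S (ρv i) ∩ H).card : ℝ) ≤ σ * ((k:ℝ) - 1)) := by
      rw [← hTdef]; exact hiT
    obtain ⟨hiR, hHi⟩ := Finset.mem_filter.1 hiT'
    have hi1 := hiN i hiR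
    have hii : i < n := by omega
    have hab : ρv i < ρv (i + 1) := hρstrict i (i + 1) (lt_add_one i) hi1
    have hm0 : (0:ℝ) ≤ ((bdry G g S (ρv i) ∩ F).card : ℝ) := Nat.cast_nonneg _
    have ha1 : ρv i < 1 := lt_of_lt_of_le hab (hρle1 _ hi1)
    have h1 : ∀ r' ∈ Set.Icc (ρv i) (ρv (i + 1)),
        0 < VL (ρv i) + ((bdry G g S (ρv i) ∩ F).card : ℝ) * (r' - ρv i) ∧
        VL (ρv i) + ((bdry G g S (ρv i) ∩ F).card : ℝ) * (r' - ρv i) ≤ B := by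
      rintro r' ⟨hra, hrb⟩
      constructor
      · have := hβvol (ρv i)
        nlinarith [mul_nonneg hm0 (sub_nonneg.2 hra)]
      · have hj := hvol_jump i hiR
        have hVB := hvolB (ρv (i + 1)) (hρle1 _ hi1)
        have hmm : ((bdry G g S (ρv i) ∩ F).card : ℝ) * (r' - ρv i) ≤
            ((bdry G g S (ρv i) ∩ F).card : ℝ) * (ρv (i + 1) - ρv i) :=
          mul_le_mul_of_nonneg_left (by linarith) hm0
        linarith
    have h2 : ∀ r' ∈ Set.Icc (ρv i) (ρv (i + 1)),
        0 < CV (ρv i) - ((bdry G g S (ρv i) ∩ F).card : ℝ) * (r' - ρv i) ∧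
        CV (ρv i) - ((bdry G g S (ρv i) ∩ F).card : ℝ) * (r' - ρv i) ≤ B := by
      rintro r' ⟨hra, hrb⟩
      constructor
      · have hj := hcvol_jump i hiR
        have hCb := hβcvol (ρv (i + 1))
        have hmm : ((bdry G g S (ρv i) ∩ F).card : ℝ) * (r' - ρv i) ≤
            ((bdry G g S (ρv i) ∩ F).card : ℝ) * (ρv (i + 1) - ρv i) :=
          mul_le_mul_of_nonneg_left (by linarith) hm0
        linarith
      · have := hcvolB (ρv i) (hρle1 _ hii)
        nlinarith [mul_nonneg hm0 (sub_nonneg.2 hra)]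
    have h3 : ∀ r' ∈ Set.Ico (ρv i) (ρv (i + 1)),
        K * (min (VL (ρv i) + ((bdry G g S (ρv i) ∩ F).card : ℝ) * (r' - ρv i))
              (CV (ρv i) - ((bdry G g S (ρv i) ∩ F).card : ℝ) * (r' - ρv i)) *
          (Real.log (Real.exp 1 * B) -
            Real.log (min (VL (ρv i) + ((bdry G g S (ρv i) ∩ F).card : ℝ) * (r' - ρv i))
              (CV (ρv i) - ((bdry G g S (ρv i) ∩ F).card : ℝ) * (r' - ρv i)))))
        < ((bdry G g S (ρv i) ∩ F).card : ℝ) := by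
      rintro r' ⟨hra, hrb⟩
      rw [← hvol_eqn i hiR r' hra hrb, ← hcvol_eqn i hiR r' hra hrb]
      have hw := hWterm r' (le_trans (hρ0le i hii) hra) (lt_of_lt_of_le hrb (hρle1 _ hi1))
      rw [hbdry_const i hiR r' hra hrb] at hw
      have hsplitb := hbFH (ρv i) (hρ0le i hii) ha1
      have hlb := hb_lb (ρv i) (hρ0le i hii) ha1
      have hfb : (1 - 1/σ) * ((bdry G g S (ρv i)).card : ℝ) ≤
          ((bdry G g S (ρv i) ∩ F).card : ℝ) := by
        have hH2 : σ * ((bdry G g S (ρv i) ∩ H).card : ℝ) ≤ ((bdry G g S (ρv i)).card : ℝ) := by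
          nlinarith [hlb, hHi, hσ0, hσsq]
        have hH3 : ((bdry G g S (ρv i) ∩ H).card : ℝ) ≤ ((bdry G g S (ρv i)).card : ℝ) / σ :=
          (le_div_iff₀ hσ0).2 (by linarith)
        have hexp : (1 - 1/σ) * ((bdry G g S (ρv i)).card : ℝ) =
            ((bdry G g S (ρv i)).card : ℝ) - ((bdry G g S (ρv i)).card : ℝ) / σ := by
          ring
        rw [hexp]
        linarith
      have hCL : K * (min (VL r') (CV r') *
          (Real.log (Real.exp 1 * B) - Real.log (min (VL r') (CV r')))) =
          (1 - 1/σ) * (2 * γ / (σ - 1) ^ 2 * (min (VL r') (CV r') *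
            (lE - Real.log (min (VL r') (CV r')))) * L) := by
        rw [hKdef, hlEdef]
        ring
      rw [hCL]
      calc (1 - 1/σ) * (2 * γ / (σ - 1) ^ 2 * (min (VL r') (CV r') *
            (lE - Real.log (min (VL r') (CV r')))) * L)
          < (1 - 1/σ) * ((bdry G g S (ρv i)).card : ℝ) := by
            exact mul_lt_mul_of_pos_left hw h1σp
        _ ≤ _ := hfb
    have hkey := aux_piece B (VL (ρv i)) (CV (ρv i)) ((bdry G g S (ρv i) ∩ F).card : ℝ) K
      (ρv i) (ρv (i + 1)) hab hm0 h1 h2 h3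
    have hj1 := hvol_jump i hiR
    have hj2 := hcvol_jump i hiR
    have hmem := Set.right_mem_Icc.2 hab.le
    have hp1 := h1 _ hmem
    have hq1 := h2 _ hmem
    have e1 : Real.log (lE - Real.log (CV (ρv i) -
          ((bdry G g S (ρv i) ∩ F).card : ℝ) * (ρv (i + 1) - ρv i)))
        ≤ Real.log (lE - Real.log (CV (ρv (i + 1)))) :=
      hlogLN_mono _ _ (lt_of_lt_of_le hβpos (hβcvol _)) (by linarith) hq1.2
    have e2 : Real.log (lE - Real.log (VL (ρv (i + 1))))
        ≤ Real.log (lE - Real.log (VL (ρv i) +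
          ((bdry G g S (ρv i) ∩ F).card : ℝ) * (ρv (i + 1) - ρv i))) :=
      hlogLN_mono _ _ hp1.1 (by linarith) (hvolB _ (hρle1 _ hi1))
    rw [← hlEdef] at hkey
    rw [hΨdef]
    dsimp only
    linarith
  have hfinal1 : Ψ 1 - Ψ 0 ≤ 2 * L := by
    have m1 := hlogmem (CV 1) (hβcvol 1) (hcvolB 1 le_rfl)
    have m2 := hlogmem (VL 1) (hβvol 1) (hvolB 1 le_rfl)
    have m3 := hlogmem (CV 0) (hβcvol 0) (hcvolB 0 zero_le_one)
    have m4 := hlogmem (VL 0) (hβvol 0) (hvolB 0 zero_le_one)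
    rw [hΨdef]
    dsimp only
    linarith [m1.1, m1.2, m2.1, m2.2, m3.1, m3.2, m4.1, m4.2]
  have hfinal2 : 2 * L < Ψ 1 - Ψ 0 := by
    have htel : ∑ i ∈ Finset.range N, (Ψ (ρv (i + 1)) - Ψ (ρv i)) = Ψ (ρv N) - Ψ (ρv 0) :=
      Finset.sum_range_sub (fun i => Ψ (ρv i)) N
    rw [hρN, hρ0] at htel
    have hTsub : T ⊆ Finset.range N := by
      rw [hTdef]; exact Finset.filter_subset _ _
    have hsub2 : ∑ i ∈ T, (Ψ (ρv (i + 1)) - Ψ (ρv i)) ≤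
        ∑ i ∈ Finset.range N, (Ψ (ρv (i + 1)) - Ψ (ρv i)) :=
      Finset.sum_le_sum_of_subset_of_nonneg hTsub (fun i hi _ => hpiece0 i hi)
    have hlt : ∑ i ∈ T, K * (ρv (i + 1) - ρv i) < ∑ i ∈ T, (Ψ (ρv (i + 1)) - Ψ (ρv i)) :=
      Finset.sum_lt_sum_of_nonempty hTne hpieceT
    have hK0 : 0 ≤ K := by
      rw [hKdef]
      apply mul_nonneg (by linarith)
      exact mul_nonneg (div_nonneg (by linarith) (sq_nonneg _)) hL0.le
    have hKsum : K * (1 - 1/σ) ≤ ∑ i ∈ T, K * (ρv (i + 1) - ρv i) := by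
      rw [← Finset.mul_sum]
      exact mul_le_mul_of_nonneg_left hTlen hK0
    have hKL : K * (1 - 1/σ) = 2 * L := by
      rw [hKdef, ← hσsq]
      have hσne : σ ≠ 0 := ne_of_gt hσ0
      have hσ1ne : σ - 1 ≠ 0 := ne_of_gt (sub_pos.2 hσ1)
      field_simp
    linarith
  linarith


end SubdividedLP
end

section
/- Characterization of 3-route all-pairs cuts (cactus characterization): a finite simple undirected graph G is a cactus — that is, every two distinct simple cycles of G share at most one vertex — if and only if there is no pair of distinct vertices u, v joined by three pairwise edge-disjoint u–v paths in G. Consequently, a set F of edges is feasible for the 3-route all-pairs cut problem (every pair of vertices has at most two pairwise edge-disjoint connecting paths in the remainder graph) exactly when (V, E\F) is a cactus. -/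
set_option linter.unusedSectionVars false
set_option linter.unusedVariables false
set_option maxHeartbeats 1000000

/-- A finite simple graph is a *cactus* if every two distinct simple cycles (i.e.
cycles with different edge sets) share at most one vertex. -/
def IsCactus {V : Type*} [DecidableEq V] (G : SimpleGraph V) : Prop :=
  ∀ (u v : V) (p : G.Walk u u) (q : G.Walk v v), p.IsCycle → q.IsCycle →
    p.edges.toFinset ≠ q.edges.toFinset →
    (p.support.toFinset ∩ q.support.toFinset).card ≤ 1

open SimpleGraph Walk

namespace Cactus19

variable {V : Type*} [DecidableEq V] {G : SimpleGraph V}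

lemma path_length_one_of_edge_mem {a b : V} {w : G.Walk a b} (hw : w.IsPath)
    (he : s(a, b) ∈ w.edges) : w.length = 1 := by
  cases w with
  | nil => simp at he
  | @cons _ c _ h w' =>
    rw [Walk.cons_isPath_iff] at hw
    simp only [Walk.edges_cons, List.mem_cons] at he
    rcases he with he | he
    · rw [Sym2.eq_iff] at he
      rcases he with ⟨-, hbc⟩ | ⟨hac, -⟩
      · subst hbc
        rw [Walk.isPath_iff_eq_nil.mp hw.1]
        simp
      · exact absurd (hac ▸ h) (G.irrefl)
    · exact absurd (w'.fst_mem_support_of_mem_edges he) hw.2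

lemma mem_support_tail_of_closed {b y : V} {c : G.Walk b b} (hc : c ≠ Walk.nil)
    (hy : y ∈ c.support) : y ∈ c.support.tail := by
  cases c with
  | nil => exact absurd rfl hc
  | @cons _ w _ h r =>
    simp only [Walk.support_cons, List.tail_cons, List.mem_cons] at hy ⊢
    rcases hy with rfl | hy
    · exact r.end_mem_support
    · exact hy

lemma cycle_split {x y : V} {c : G.Walk x x} (hc : c.IsCycle) (hy : y ∈ c.support)
    (hxy : y ≠ x) :
    ∃ (P Q : G.Walk x y), P.IsPath ∧ Q.IsPath ∧ P.edges.Disjoint Q.edges ∧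
      ∀ e, e ∈ c.edges ↔ e ∈ P.edges ∨ e ∈ Q.edges := by
  cases c with
  | nil => exact absurd rfl hc.ne_nil
  | @cons _ w _ h r =>
    have htrail : (Walk.cons h r).IsTrail := hc.isTrail
    have hnodup : r.support.Nodup := hc.2
    have hr : r.IsPath := (Walk.isPath_def r).mpr hnodup
    have hy' : y ∈ r.support := by
      simp only [Walk.support_cons, List.mem_cons] at hy
      exact hy.resolve_left hxy
    -- support decomposition
    have hsupp : r.support = (r.takeUntil y hy').support ++ (r.dropUntil y hy').support.tail := by
      conv_lhs => rw [← r.take_spec hy']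
      rw [Walk.support_append]
    have hsnd : ((r.takeUntil y hy').support ++ (r.dropUntil y hy').support.tail).Nodup := by
      rw [← hsupp]; exact hnodup
    rw [List.nodup_append] at hsnd
    have hxnot : x ∉ (r.takeUntil y hy').support := by
      intro hxin
      have hxdrop : x ∈ (r.dropUntil y hy').support := (r.dropUntil y hy').end_mem_support
      rw [(r.dropUntil y hy').support_eq_cons] at hxdrop
      rcases List.mem_cons.mp hxdrop with rfl | hxdrop
      · exact hxy rfl
      · exact hsnd.2.2 x hxin x hxdrop rfl
    refine ⟨Walk.cons h (r.takeUntil y hy'), (r.dropUntil y hy').reverse,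
      (hr.takeUntil hy').cons hxnot, (hr.dropUntil hy').reverse, ?_, ?_⟩
    · -- edge disjointness
      have hed : (Walk.cons h r).edges.Nodup := htrail.edges_nodup
      have hre : r.edges = (r.takeUntil y hy').edges ++ (r.dropUntil y hy').edges := by
        conv_lhs => rw [← r.take_spec hy']
        rw [Walk.edges_append]
      rw [Walk.edges_cons, hre, List.nodup_cons, List.nodup_append] at hed
      intro e he he'
      rw [Walk.edges_reverse, List.mem_reverse] at he'
      simp only [Walk.edges_cons, List.mem_cons] at he
      rcases he with rfl | he
      · exact hed.1 (List.mem_append_right _ he')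
      · exact hed.2.2.2 e he e he' rfl
    · intro e
      have hre : r.edges = (r.takeUntil y hy').edges ++ (r.dropUntil y hy').edges := by
        conv_lhs => rw [← r.take_spec hy']
        rw [Walk.edges_append]
      simp only [Walk.edges_cons, hre, List.mem_cons, List.mem_append, Walk.edges_reverse,
        List.mem_reverse]
      tauto

lemma append_reverse_isCycle {u v : V} {p q : G.Walk u v} (huv : u ≠ v)
    (hp : p.IsPath) (hq : q.IsPath) (hd : p.edges.Disjoint q.edges)
    (hint : ∀ w, w ∈ p.support → w ∈ q.support → w = u ∨ w = v) :
    (p.append q.reverse).IsCycle := by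
  rw [Walk.isCycle_def, Walk.isTrail_def]
  refine ⟨?_, ?_, ?_⟩
  · rw [Walk.edges_append, Walk.edges_reverse, List.nodup_append]
    exact ⟨hp.isTrail.edges_nodup, (List.nodup_reverse).mpr hq.isTrail.edges_nodup,
      fun e he e' he' h => by subst h; exact hd he (List.mem_reverse.mp he')⟩
  · intro hnil
    have := congrArg Walk.length hnil
    rw [Walk.length_append] at this
    simp only [Walk.length_nil] at this
    exact huv (Walk.eq_of_length_eq_zero (Nat.eq_zero_of_add_eq_zero_right this))
  · rw [Walk.tail_support_append, List.nodup_append]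
    refine ⟨hp.support_nodup.tail, hq.reverse.support_nodup.tail, ?_⟩
    intro w hw w' hw' hww'
    subst hww'
    have hwp : w ∈ p.support := List.mem_of_mem_tail hw
    have hwq : w ∈ q.support := by
      have : w ∈ q.reverse.support := List.mem_of_mem_tail hw'
      rwa [Walk.support_reverse, List.mem_reverse] at this
    rcases hint w hwp hwq with rfl | rfl
    · have := hp.support_nodup
      rw [p.support_eq_cons, List.nodup_cons] at this
      exact this.1 hw
    · have := hq.reverse.support_nodup
      rw [q.reverse.support_eq_cons, List.nodup_cons] at this
      exact this.1 hw'

lemma exists_clean_segment (S : Set V) (E1 : Set (Sym2 V))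
    (hE : ∀ e ∈ E1, ∀ a ∈ e, a ∈ S) :
    ∀ n {a b : V} (w : G.Walk a b), w.length ≤ n → w.IsPath → a ∈ S → b ∈ S → a ≠ b →
      (∃ e ∈ w.edges, e ∉ E1) →
      ∃ (x y : V) (R : G.Walk x y), x ∈ S ∧ y ∈ S ∧ x ≠ y ∧ R.IsPath ∧
        ∀ e ∈ R.edges, e ∉ E1 := by
  intro n
  induction n with
  | zero =>
    intro a b w hlen hw ha hb hab hbad
    exact absurd (Walk.eq_of_length_eq_zero (Nat.le_zero.mp hlen)) hab
  | succ n ih =>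
    intro a b w hlen hw ha hb hab hbad
    by_cases hall : ∀ e ∈ w.edges, e ∉ E1
    · exact ⟨a, b, w, ha, hb, hab, hw, hall⟩
    · push_neg at hall
      obtain ⟨e, hew, heE⟩ := hall
      obtain ⟨e0, he0w, he0E⟩ := hbad
      -- splitting helper
      have split : ∀ c (hc : c ∈ w.support), c ∈ S → c ≠ a → c ≠ b →
          ∃ (x y : V) (R : G.Walk x y), x ∈ S ∧ y ∈ S ∧ x ≠ y ∧ R.IsPath ∧
            ∀ e ∈ R.edges, e ∉ E1 := by
        intro c hc hcS hca hcb
        have hlen2 : (w.takeUntil c hc).length + (w.dropUntil c hc).length = w.length := by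
          have := congrArg Walk.length (w.take_spec hc)
          rwa [Walk.length_append] at this
        have htpos : 1 ≤ (w.takeUntil c hc).length := by
          by_contra hzero
          push_neg at hzero
          exact hca (Walk.eq_of_length_eq_zero (Nat.lt_one_iff.mp hzero)).symm
        have hdpos : 1 ≤ (w.dropUntil c hc).length := by
          by_contra hzero
          push_neg at hzero
          exact hcb (Walk.eq_of_length_eq_zero (Nat.lt_one_iff.mp hzero))
        have hedges : w.edges = (w.takeUntil c hc).edges ++ (w.dropUntil c hc).edges := by
          conv_lhs => rw [← w.take_spec hc]
          rw [Walk.edges_append]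
        rw [hedges, List.mem_append] at he0w
        rcases he0w with h0 | h0
        · exact ih (w.takeUntil c hc) (by omega) (hw.takeUntil hc) ha hcS (Ne.symm hca)
            ⟨e0, h0, he0E⟩
        · exact ih (w.dropUntil c hc) (by omega) (hw.dropUntil hc) hcS hb hcb
            ⟨e0, h0, he0E⟩
      induction e using Sym2.ind with
      | _ c d =>
        have hcS : c ∈ S := hE _ heE c (by simp)
        have hdS : d ∈ S := hE _ heE d (by simp)
        have hcsup : c ∈ w.support := w.fst_mem_support_of_mem_edges hew
        have hdsup : d ∈ w.support := w.snd_mem_support_of_mem_edges hew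
        by_cases hc1 : c ≠ a ∧ c ≠ b
        · exact split c hcsup hcS hc1.1 hc1.2
        · by_cases hd1 : d ≠ a ∧ d ≠ b
          · exact split d hdsup hdS hd1.1 hd1.2
          · -- both endpoints are in {a, b}; then s(c,d) = s(a,b)
            have hcd : c ≠ d := (w.adj_of_mem_edges hew).ne
            push_neg at hc1 hd1
            have heab : s(c, d) = s(a, b) := by
              by_cases hca : c = a
              · have hdb : d = b := hd1 (fun h => hcd (h.trans hca.symm).symm)
                rw [hca, hdb]
              · have hcb : c = b := hc1 hca
                have hda : d = a := by
                  by_cases h' : d = a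
                  · exact h'
                  · exact absurd (hd1 h') (fun h => (hcd (h.trans hcb.symm).symm).elim)
                rw [hcb, hda, Sym2.eq_swap]
            have hlen1 : w.length = 1 := path_length_one_of_edge_mem hw (heab ▸ hew)
            have : w.edges.length = 1 := by rw [Walk.length_edges, hlen1]
            obtain ⟨x, hx⟩ := List.length_eq_one_iff.mp this
            rw [hx] at he0w hew
            simp only [List.mem_singleton] at he0w hew
            rw [he0w, ← hew] at he0E
            exact (he0E heE).elim

lemma reduce {u v w : V} (huv : u ≠ v) {p q r : G.Walk u v}
    (hp : p.IsPath) (hq : q.IsPath) (hr : r.IsPath)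
    (hpq : p.edges.Disjoint q.edges) (hpr : p.edges.Disjoint r.edges)
    (hqr : q.edges.Disjoint r.edges)
    (hwp : w ∈ p.support) (hwq : w ∈ q.support) (hwu : w ≠ u) (hwv : w ≠ v) :
    ∃ (p' q' r' : G.Walk u w), p'.IsPath ∧ q'.IsPath ∧ r'.IsPath ∧
      p'.edges.Disjoint q'.edges ∧ p'.edges.Disjoint r'.edges ∧
      q'.edges.Disjoint r'.edges ∧
      p'.length + q'.length + r'.length < p.length + q.length + r.length := by
  set p' := p.takeUntil w hwp with hp'def
  set q' := q.takeUntil w hwq with hq'def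
  set dp := p.dropUntil w hwp with hdpdef
  set r' := ((dp.append r.reverse).reverse).bypass with hr'def
  -- edges of p split
  have hpe : p.edges = p'.edges ++ dp.edges := by
    conv_lhs => rw [← p.take_spec hwp]
    rw [Walk.edges_append]
  have hpnodup : (p'.edges ++ dp.edges).Nodup := by rw [← hpe]; exact hp.isTrail.edges_nodup
  rw [List.nodup_append] at hpnodup
  have hq'sub : ∀ e ∈ q'.edges, e ∈ q.edges := fun e he => q.edges_takeUntil_subset hwq he
  have hp'sub : ∀ e ∈ p'.edges, e ∈ p.edges := fun e he => p.edges_takeUntil_subset hwp he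
  have hdpsub : ∀ e ∈ dp.edges, e ∈ p.edges := fun e he => p.edges_dropUntil_subset hwp he
  have hr'sub : ∀ e ∈ r'.edges, e ∈ dp.edges ∨ e ∈ r.edges := by
    intro e he
    have := ((dp.append r.reverse).reverse).edges_bypass_subset he
    rw [Walk.edges_reverse, List.mem_reverse, Walk.edges_append, List.mem_append,
      Walk.edges_reverse, List.mem_reverse] at this
    exact this
  -- lengths
  have hlp : p'.length + dp.length = p.length := by
    have := congrArg Walk.length (p.take_spec hwp)
    rwa [Walk.length_append] at this
  have hlq : q'.length < q.length := by
    have h1 : q'.length + (q.dropUntil w hwq).length = q.length := by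
      have := congrArg Walk.length (q.take_spec hwq)
      rwa [Walk.length_append] at this
    have h2 : 1 ≤ (q.dropUntil w hwq).length := by
      by_contra hzero
      push_neg at hzero
      exact hwv (Walk.eq_of_length_eq_zero (Nat.lt_one_iff.mp hzero))
    omega
  have hlr : r'.length ≤ dp.length + r.length := by
    calc r'.length ≤ ((dp.append r.reverse).reverse).length := Walk.length_bypass_le _
    _ = dp.length + r.length := by rw [Walk.length_reverse, Walk.length_append,
        Walk.length_reverse]
  refine ⟨p', q', r', hp.takeUntil hwp, hq.takeUntil hwq, Walk.bypass_isPath _,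
    ?_, ?_, ?_, by omega⟩
  · exact fun e he he' => hpq (hp'sub e he) (hq'sub e he')
  · intro e he he'
    rcases hr'sub e he' with h' | h'
    · exact hpnodup.2.2 e he e h' rfl
    · exact hpr (hp'sub e he) h'
  · intro e he he'
    rcases hr'sub e he' with h' | h'
    · exact hpq (hdpsub e h') (hq'sub e he)
    · exact hqr (hq'sub e he) h'

lemma no_three (hG : IsCactus G) :
    ∀ (n : ℕ) {u v : V}, u ≠ v → ∀ (p q r : G.Walk u v), p.IsPath → q.IsPath → r.IsPath →
      p.length + q.length + r.length ≤ n →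
      p.edges.Disjoint q.edges → p.edges.Disjoint r.edges → q.edges.Disjoint r.edges →
      False := by
  intro n
  induction n with
  | zero =>
    intro u v huv p q r hp hq hr hlen hpq hpr hqr
    exact huv (Walk.eq_of_length_eq_zero (p := p) (by omega))
  | succ n ih =>
    intro u v huv p q r hp hq hr hlen hpq hpr hqr
    by_cases hsh : ∃ w, w ≠ u ∧ w ≠ v ∧ ((w ∈ p.support ∧ w ∈ q.support) ∨
        (w ∈ p.support ∧ w ∈ r.support) ∨ (w ∈ q.support ∧ w ∈ r.support))
    · obtain ⟨w, hwu, hwv, hcase⟩ := hsh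
      rcases hcase with ⟨h1, h2⟩ | ⟨h1, h2⟩ | ⟨h1, h2⟩
      · obtain ⟨p', q', r', hp', hq', hr', d1, d2, d3, hlt⟩ :=
          reduce huv hp hq hr hpq hpr hqr h1 h2 hwu hwv
        exact ih (Ne.symm hwu) p' q' r' hp' hq' hr' (by omega) d1 d2 d3
      · obtain ⟨p', q', r', hp', hq', hr', d1, d2, d3, hlt⟩ :=
          reduce huv hp hr hq hpr hpq hqr.symm h1 h2 hwu hwv
        exact ih (Ne.symm hwu) p' q' r' hp' hq' hr' (by omega) d1 d2 d3
      · obtain ⟨p', q', r', hp', hq', hr', d1, d2, d3, hlt⟩ :=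
          reduce huv hq hr hp hqr hpq.symm hpr.symm h1 h2 hwu hwv
        exact ih (Ne.symm hwu) p' q' r' hp' hq' hr' (by omega) d1 d2 d3
    · push_neg at hsh
      have hint_pq : ∀ w, w ∈ p.support → w ∈ q.support → w = u ∨ w = v := by
        intro w h1 h2
        by_contra hc
        push_neg at hc
        exact (hsh w hc.1 hc.2).1 h1 h2
      have hint_pr : ∀ w, w ∈ p.support → w ∈ r.support → w = u ∨ w = v := by
        intro w h1 h2
        by_contra hc
        push_neg at hc
        exact (hsh w hc.1 hc.2).2.1 h1 h2
      have c1 := append_reverse_isCycle huv hp hq hpq hint_pq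
      have c2 := append_reverse_isCycle huv hp hr hpr hint_pr
      -- the two cycles differ in edges
      have hqlen : q.length ≠ 0 := fun h => huv (Walk.eq_of_length_eq_zero h)
      have hqe : q.edges ≠ [] := by
        intro h
        have := q.length_edges
        rw [h] at this
        exact hqlen (by simpa using this.symm)
      obtain ⟨e, he⟩ := List.exists_mem_of_ne_nil _ hqe
      have he1 : e ∈ (p.append q.reverse).edges := by
        rw [Walk.edges_append, List.mem_append, Walk.edges_reverse, List.mem_reverse]
        exact Or.inr he
      have he2 : e ∉ (p.append r.reverse).edges := by
        rw [Walk.edges_append, List.mem_append, Walk.edges_reverse, List.mem_reverse]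
        rintro (h' | h')
        · exact hpq h' he
        · exact hqr he h'
      have hne : (p.append q.reverse).edges.toFinset ≠ (p.append r.reverse).edges.toFinset := by
        intro h
        apply he2
        rw [← List.mem_toFinset, ← h, List.mem_toFinset]
        exact he1
      have hcard := hG u u _ _ c1 c2 hne
      have hsub : ({u, v} : Finset V) ⊆
          (p.append q.reverse).support.toFinset ∩ (p.append r.reverse).support.toFinset := by
        intro z hz
        simp only [Finset.mem_insert, Finset.mem_singleton] at hz
        rw [Finset.mem_inter, List.mem_toFinset, List.mem_toFinset]
        rcases hz with rfl | rfl
        · exact ⟨Walk.start_mem_support _, Walk.start_mem_support _⟩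
        · constructor <;>
          · apply Walk.subset_support_append_left
            exact Walk.end_mem_support p
      have : (2 : ℕ) ≤ 1 := by
        calc (2 : ℕ) = ({u, v} : Finset V).card := by
              rw [Finset.card_insert_of_notMem (by simpa using huv), Finset.card_singleton]
        _ ≤ _ := Finset.card_le_card hsub
        _ ≤ 1 := hcard
      omega

/-- Membership of support is preserved by rotation of a closed walk. -/
lemma mem_support_rotate {b x y : V} {c : G.Walk b b} (hc : c ≠ Walk.nil)
    (hx : x ∈ c.support) (hy : y ∈ c.support) : y ∈ (c.rotate x hx).support := by
  have h1 : y ∈ c.support.tail := mem_support_tail_of_closed hc hy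
  have h2 := Walk.support_rotate c x hx
  have : y ∈ (c.rotate x hx).support.tail := h2.mem_iff.mpr h1
  exact List.mem_of_mem_tail this

lemma bwd {a b : V} {p : G.Walk a a} {q : G.Walk b b} (hp : p.IsCycle) (hq : q.IsCycle)
    {x y : V} (hxp : x ∈ p.support) (hyp : y ∈ p.support)
    (hxq : x ∈ q.support) (hyq : y ∈ q.support)
    (hxy : x ≠ y) {e : Sym2 V} (heq : e ∈ q.edges) (hep : e ∉ p.edges) :
    ∃ (u v : V), u ≠ v ∧ ∃ (p₁ p₂ p₃ : G.Walk u v), p₁.IsPath ∧ p₂.IsPath ∧ p₃.IsPath ∧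
      p₁.edges.Disjoint p₂.edges ∧ p₁.edges.Disjoint p₃.edges ∧
      p₂.edges.Disjoint p₃.edges := by
  -- rotate q to start at x and split at y
  have hq' : (q.rotate x hxq).IsCycle := hq.rotate hxq
  have hyq' : y ∈ (q.rotate x hxq).support := mem_support_rotate hq.ne_nil hxq hyq
  obtain ⟨Q1, Q2, hQ1, hQ2, hQd, hQe⟩ := cycle_split hq' hyq' hxy.symm
  have heq' : e ∈ (q.rotate x hxq).edges := (q.rotate_edges x hxq).mem_iff.mpr heq
  -- the bad edge is in Q1 or Q2
  have hsegment : ∃ (x' y' : V) (R : G.Walk x' y'), x' ∈ p.support ∧ y' ∈ p.support ∧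
      x' ≠ y' ∧ R.IsPath ∧ ∀ e' ∈ R.edges, e' ∉ p.edges := by
    have hE : ∀ e' ∈ {e' : Sym2 V | e' ∈ p.edges}, ∀ z ∈ e', z ∈ {z : V | z ∈ p.support} := by
      intro e' he' z hz
      induction e' using Sym2.ind with
      | _ c d =>
        rcases Sym2.mem_iff.mp hz with rfl | rfl
        · exact p.fst_mem_support_of_mem_edges he'
        · exact p.snd_mem_support_of_mem_edges he'
    rcases (hQe e).mp heq' with hQ | hQ
    · obtain ⟨x', y', R, h1, h2, h3, h4, h5⟩ :=
        exists_clean_segment {z : V | z ∈ p.support} {e' : Sym2 V | e' ∈ p.edges} hE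
          Q1.length Q1 le_rfl hQ1 hxp hyp hxy ⟨e, hQ, hep⟩
      exact ⟨x', y', R, h1, h2, h3, h4, h5⟩
    · obtain ⟨x', y', R, h1, h2, h3, h4, h5⟩ :=
        exists_clean_segment {z : V | z ∈ p.support} {e' : Sym2 V | e' ∈ p.edges} hE
          Q2.length Q2 le_rfl hQ2 hxp hyp hxy ⟨e, hQ, hep⟩
      exact ⟨x', y', R, h1, h2, h3, h4, h5⟩
  obtain ⟨x', y', R, hx'p, hy'p, hxy', hR, hRclean⟩ := hsegment
  -- rotate p to start at x' and split at y'
  have hp' : (p.rotate x' hx'p).IsCycle := hp.rotate hx'p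
  have hy'p' : y' ∈ (p.rotate x' hx'p).support := mem_support_rotate hp.ne_nil hx'p hy'p
  obtain ⟨P1, P2, hP1, hP2, hPd, hPe⟩ := cycle_split hp' hy'p' hxy'.symm
  have hPsub : ∀ e', e' ∈ P1.edges ∨ e' ∈ P2.edges → e' ∈ p.edges := by
    intro e' h'
    exact (p.rotate_edges x' hx'p).mem_iff.mp ((hPe e').mpr h')
  exact ⟨x', y', hxy', P1, P2, R, hP1, hP2, hR,
    hPd,
    fun e' h1 h2 => hRclean e' h2 (hPsub e' (Or.inl h1)),
    fun e' h1 h2 => hRclean e' h2 (hPsub e' (Or.inr h1))⟩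

lemma main_iff (G : SimpleGraph V) :
    IsCactus G ↔ ∀ (u v : V), u ≠ v →
      ∀ (p₁ p₂ p₃ : G.Walk u v), p₁.IsPath → p₂.IsPath → p₃.IsPath →
        ¬ (Disjoint p₁.edges.toFinset p₂.edges.toFinset ∧
           Disjoint p₁.edges.toFinset p₃.edges.toFinset ∧
           Disjoint p₂.edges.toFinset p₃.edges.toFinset) := by
  constructor
  · intro hG u v huv p1 p2 p3 h1 h2 h3 hcon
    obtain ⟨d12, d13, d23⟩ := hcon
    rw [List.disjoint_toFinset_iff_disjoint] at d12 d13 d23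
    exact no_three hG (p1.length + p2.length + p3.length) huv p1 p2 p3 h1 h2 h3 le_rfl
      d12 d13 d23
  · intro h a b p q hpc hqc hne
    by_contra hcard
    push_neg at hcard
    obtain ⟨x, y, hx, hy, hxy⟩ := Finset.one_lt_card_iff.mp hcard
    rw [Finset.mem_inter, List.mem_toFinset, List.mem_toFinset] at hx hy
    have hediff : ∃ e, (e ∈ q.edges ∧ e ∉ p.edges) ∨ (e ∈ p.edges ∧ e ∉ q.edges) := by
      by_contra h'
      push_neg at h'
      apply hne
      ext e
      rw [List.mem_toFinset, List.mem_toFinset]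
      exact ⟨fun he => (h' e).2 he, fun he => (h' e).1 he⟩
    have key : ∃ (u v : V), u ≠ v ∧ ∃ (p₁ p₂ p₃ : G.Walk u v),
        p₁.IsPath ∧ p₂.IsPath ∧ p₃.IsPath ∧
        p₁.edges.Disjoint p₂.edges ∧ p₁.edges.Disjoint p₃.edges ∧
        p₂.edges.Disjoint p₃.edges := by
      obtain ⟨e, ⟨heq, hep⟩ | ⟨hep, heq⟩⟩ := hediff
      · exact bwd hpc hqc hx.1 hy.1 hx.2 hy.2 hxy heq hep
      · exact bwd hqc hpc hx.2 hy.2 hx.1 hy.1 hxy hep heq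
    obtain ⟨u, v, huv, p1, p2, p3, h1, h2, h3, d1, d2, d3⟩ := key
    exact h u v huv p1 p2 p3 h1 h2 h3
      ⟨List.disjoint_toFinset_iff_disjoint.mpr d1,
       List.disjoint_toFinset_iff_disjoint.mpr d2,
       List.disjoint_toFinset_iff_disjoint.mpr d3⟩

end Cactus19

/-- Cactus characterization of 3-route all-pairs cuts: a finite
simple graph `G` is a cactus iff no pair of distinct vertices `u, v` is joined by
three pairwise edge-disjoint `u`–`v` paths.  Consequently an edge set `F` is feasible
for the 3-route all-pairs cut problem exactly when `(V, E \ F)` is a cactus. -/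
theorem stmt_19 {V : Type*} [Fintype V] [DecidableEq V] (G : SimpleGraph V) :
    (IsCactus G ↔ ∀ (u v : V), u ≠ v →
      ∀ (p₁ p₂ p₃ : G.Walk u v), p₁.IsPath → p₂.IsPath → p₃.IsPath →
        ¬ (Disjoint p₁.edges.toFinset p₂.edges.toFinset ∧
           Disjoint p₁.edges.toFinset p₃.edges.toFinset ∧
           Disjoint p₂.edges.toFinset p₃.edges.toFinset)) ∧
    (∀ F : Set (Sym2 V),
      (IsCactus (G.deleteEdges F) ↔ ∀ (u v : V), u ≠ v →
        ∀ (p₁ p₂ p₃ : (G.deleteEdges F).Walk u v),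
          p₁.IsPath → p₂.IsPath → p₃.IsPath →
            ¬ (Disjoint p₁.edges.toFinset p₂.edges.toFinset ∧
               Disjoint p₁.edges.toFinset p₃.edges.toFinset ∧
               Disjoint p₂.edges.toFinset p₃.edges.toFinset))) :=
  ⟨Cactus19.main_iff G, fun F => Cactus19.main_iff _⟩
end
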